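/- arXiv:2309.01980 — 6 statements merged into one kernel-verified Lean document; each statement's English description precedes it below -/
import Mathlib

section
/- Let {(x^k, z^k, y^k)} be a sequence generated by the safeguarded implicit augmented Lagrangian algorithm for problem (P) with {ε_k} bounded. Assume that dom g is closed and that the approximate global optimality condition holds: L_{μ_k}(x^k, ŷ^k) ≤ L_{μ_k}(x, ŷ^k) + ε_k for all x ∈ ℝ^n and all k. Then every accumulation point x̄ of {x^k} is a global minimizer of the function x ↦ dist(c(x), dom g); in particular, x̄ is feasible for (P) whenever the feasible set of (P) is nonempty. -/
open Filter Topology Bornology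

noncomputable section

/-- Euclidean space `ℝ^d`. -/
abbrev Euc (d : ℕ) := EuclideanSpace ℝ (Fin d)

namespace Paper

variable {n m : ℕ}

/-- The effective domain of an extended-real-valued function. -/
def edom (g : Euc m → EReal) : Set (Euc m) := {z | g z < ⊤}

/-- `g` maps into `ℝ ∪ {∞}` and is proper (its domain is nonempty). -/
def ProperFn (g : Euc m → EReal) : Prop := (∀ z, g z ≠ ⊥) ∧ ∃ z, g z < ⊤

/-- `z ↦ g z + ‖z‖²/(2μ)` is bounded below. -/
def ProxBoundedWith (g : Euc m → EReal) (μ : ℝ) : Prop :=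
  ∃ b : ℝ, ∀ z, (b : EReal) ≤ g z + ((‖z‖ ^ 2 / (2 * μ) : ℝ) : EReal)

/-- `g` is prox-bounded. -/
def ProxBounded (g : Euc m → EReal) : Prop := ∃ μ : ℝ, 0 < μ ∧ ProxBoundedWith g μ

/-- `0 < μ < μ_g`, where `μ_g` is the threshold of prox-boundedness of `g`. -/
def BelowThreshold (g : Euc m → EReal) (μ : ℝ) : Prop :=
  0 < μ ∧ ∃ μ' : ℝ, μ < μ' ∧ ProxBoundedWith g μ'

/-- The tangent cone to `Ω` at `wbar`. -/
def tangentCone {E : Type*} [NormedAddCommGroup E] [NormedSpace ℝ E]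
    (Ω : Set E) (wbar : E) : Set E :=
  {v | ∃ (t : ℕ → ℝ) (w : ℕ → E), (∀ k, 0 < t k) ∧ Tendsto t atTop (𝓝 0) ∧
        Tendsto w atTop (𝓝 v) ∧ ∀ k, wbar + t k • w k ∈ Ω}

/-- The regular (Fréchet) subdifferential of `g` at `zbar`. -/
def regSubdiff (g : Euc m → EReal) (zbar : Euc m) : Set (Euc m) :=
  {v | 0 ≤ liminf (fun z : Euc m =>
      (g z - g zbar - ((inner ℝ v (z - zbar) : ℝ) : EReal)) / ((‖z - zbar‖ : ℝ) : EReal))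
      (𝓝[≠] zbar)}

/-- The limiting (Mordukhovich) subdifferential of `g` at `zbar`. -/
def limSubdiff (g : Euc m → EReal) (zbar : Euc m) : Set (Euc m) :=
  {v | ∃ zs vs : ℕ → Euc m, Tendsto zs atTop (𝓝 zbar) ∧
        Tendsto (fun k => g (zs k)) atTop (𝓝 (g zbar)) ∧
        Tendsto vs atTop (𝓝 v) ∧ ∀ k, vs k ∈ regSubdiff g (zs k)}

/-- The subderivative `dg(zbar)(v)`. -/
def subderiv (g : Euc m → EReal) (zbar v : Euc m) : EReal :=
  liminf (fun p : ℝ × Euc m => (g (zbar + p.1 • p.2) - g zbar) / ((p.1 : ℝ) : EReal))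
    ((𝓝[>] (0 : ℝ)) ×ˢ 𝓝 v)

/-- The second subderivative `d²g(zbar, ybar)(v)`. -/
def secondSubderiv (g : Euc m → EReal) (zbar ybar v : Euc m) : EReal :=
  liminf (fun p : ℝ × Euc m =>
      (g (zbar + p.1 • p.2) - g zbar - ((p.1 * (inner ℝ ybar p.2 : ℝ) : ℝ) : EReal)) /
        ((p.1 ^ 2 / 2 : ℝ) : EReal))
    ((𝓝[>] (0 : ℝ)) ×ˢ 𝓝 v)

/-- The Lagrangian `L(·, y) = f + ⟨y, c ·⟩` of (P). -/
def LagFn (f : Euc n → ℝ) (c : Euc n → Euc m) (y : Euc m) : Euc n → ℝ :=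
  fun x => f x + (inner ℝ y (c x) : ℝ)

/-- `∇ₓL(xbar, y) = 0`. -/
def gradLagZero (f : Euc n → ℝ) (c : Euc n → Euc m) (xbar : Euc n) (y : Euc m) : Prop :=
  fderiv ℝ (LagFn f c y) xbar = 0

/-- The set `Λ(xbar)` of Lagrange multipliers of the M-stationarity system at `xbar`. -/
def Lambda (f : Euc n → ℝ) (c : Euc n → Euc m) (g : Euc m → EReal) (xbar : Euc n) :
    Set (Euc m) :=
  {y | gradLagZero f c xbar y ∧ y ∈ limSubdiff g (c xbar)}

/-- `∇²ₓₓL(xbar, y)[u, w]`. -/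
def hessLag (f : Euc n → ℝ) (c : Euc n → Euc m) (xbar : Euc n) (y : Euc m) (u w : Euc n) : ℝ :=
  iteratedFDeriv ℝ 2 (LagFn f c y) xbar ![u, w]

/-- The critical cone `C(xbar)` of (P). -/
def critCone (f : Euc n → ℝ) (c : Euc n → Euc m) (g : Euc m → EReal) (xbar : Euc n) :
    Set (Euc n) :=
  {u | ((fderiv ℝ f xbar u : ℝ) : EReal) + subderiv g (c xbar) (fderiv ℝ c xbar u) ≤ 0}

/-- The directional multiplier set `Λ(xbar, u)`. -/
def dirLambda (f : Euc n → ℝ) (c : Euc n → Euc m) (g : Euc m → EReal) (xbar : Euc n)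
    (u : Euc n) : Set (Euc m) :=
  {y | gradLagZero f c xbar y ∧
    subderiv g (c xbar) (fderiv ℝ c xbar u) = ((inner ℝ y (fderiv ℝ c xbar u) : ℝ) : EReal) ∧
    secondSubderiv g (c xbar) y (fderiv ℝ c xbar u) ≠ ⊥}

/-- The second-order sufficient condition (SOSC) for (P) at `xbar`. -/
def SOSC (f : Euc n → ℝ) (c : Euc n → Euc m) (g : Euc m → EReal) (xbar : Euc n) : Prop :=
  ∀ u ∈ critCone f c g xbar, u ≠ 0 → ∃ y ∈ dirLambda f c g xbar u,
    0 < ((hessLag f c xbar y u u : ℝ) : EReal) + secondSubderiv g (c xbar) y (fderiv ℝ c xbar u)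

/-- The stationarity residual `Θ(x, z, y)`; the distance to the (possibly empty)
subdifferential is taken in `EReal` via an infimum. -/
def Theta (f : Euc n → ℝ) (c : Euc n → Euc m) (g : Euc m → EReal)
    (x : Euc n) (z y : Euc m) : EReal :=
  ((‖fderiv ℝ (LagFn f c y) x‖ + ‖c x - z‖ : ℝ) : EReal) +
    ⨅ v ∈ limSubdiff g z, ((‖y - v‖ : ℝ) : EReal)

/-- The graphical derivative `D(∂g)(zbar, ybar)(v)` of the limiting subdifferential mapping. -/
def gDeriv (g : Euc m → EReal) (zbar ybar v : Euc m) : Set (Euc m) :=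
  {η | (v, η) ∈ tangentCone {p : Euc m × Euc m | p.2 ∈ limSubdiff g p.1} (zbar, ybar)}

/-- The Moreau envelope `g^μ(w)`. -/
def moreau (g : Euc m → EReal) (μ : ℝ) (w : Euc m) : EReal :=
  ⨅ z, (g z + ((‖z - w‖ ^ 2 / (2 * μ) : ℝ) : EReal))

/-- The augmented Lagrangian `L_μ(x, y)` of (P). -/
def ALfun (f : Euc n → ℝ) (c : Euc n → Euc m) (g : Euc m → EReal) (μ : ℝ)
    (x : Euc n) (y : Euc m) : EReal :=
  (f x : EReal) + moreau g μ (c x + μ • y) - ((μ / 2 * ‖y‖ ^ 2 : ℝ) : EReal)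

/-- `xbar` is a strict local minimizer of (P). -/
def StrictLocalMin (f : Euc n → ℝ) (c : Euc n → Euc m) (g : Euc m → EReal)
    (xbar : Euc n) : Prop :=
  c xbar ∈ edom g ∧ ∃ ρ : ℝ, 0 < ρ ∧ ∀ x : Euc n, ‖x - xbar‖ ≤ ρ → c x ∈ edom g → x ≠ xbar →
    (f xbar : EReal) + g (c xbar) < (f x : EReal) + g (c x)

open Classical in
/-- A sequence generated by the safeguarded implicit augmented Lagrangian method
(Algorithm 4.1) for problem (P). -/
structure ALMSeq (n m : ℕ) (f : Euc n → ℝ) (c : Euc n → Euc m) (g : Euc m → EReal) where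
  /-- sufficient-decrease parameter -/
  θ : ℝ
  /-- penalty-reduction parameter -/
  κ : ℝ
  hθ : 0 < θ ∧ θ < 1
  hκ : 0 < κ ∧ κ < 1
  /-- safeguarding set -/
  Y : Set (Euc m)
  hYne : Y.Nonempty
  hYbdd : IsBounded Y
  /-- primal iterates -/
  x : ℕ → Euc n
  /-- auxiliary (certificate) iterates -/
  z : ℕ → Euc m
  /-- safeguarded multiplier estimates -/
  yhat : ℕ → Euc m
  /-- multiplier iterates -/
  y : ℕ → Euc m
  /-- penalty parameters -/
  μ : ℕ → ℝ
  /-- inner tolerances -/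
  ε : ℕ → ℝ
  hyhatY : ∀ k, yhat k ∈ Y
  hεnn : ∀ k, 0 ≤ ε k
  hμthr : ∀ k, BelowThreshold g (μ k)
  /-- `z k ∈ prox_{μ_k g}(c(x^k) + μ_k ŷ^k)` -/
  hprox : ∀ k, ∀ w : Euc m,
    g (z k) + ((‖z k - (c (x k) + μ k • yhat k)‖ ^ 2 / (2 * μ k) : ℝ) : EReal) ≤
      g w + ((‖w - (c (x k) + μ k • yhat k)‖ ^ 2 / (2 * μ k) : ℝ) : EReal)
  /-- dual update rule -/
  hy : ∀ k, y k = yhat k + (μ k)⁻¹ • (c (x k) - z k)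
  /-- approximate stationarity for the subproblem, `‖∇ₓL^S_{μ_k}(x^k,z^k,ŷ^k)‖ ≤ ε_k` -/
  hdual : ∀ k, ‖fderiv ℝ (LagFn f c (y k)) (x k)‖ ≤ ε k
  /-- penalty update rule -/
  hμupd : ∀ k, μ (k + 1) =
    if k = 0 ∨ ‖c (x k) - z k‖ ≤ θ * ‖c (x (k - 1)) - z (k - 1)‖ then μ k else κ * μ k


private lemma mul2mu {μ a b V a' b' W e : ℝ} (hμ : 0 < μ)
    (h : a + b + V / (2 * μ) ≤ a' + b' + W / (2 * μ) + e) :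
    2 * μ * a + 2 * μ * b + V ≤ 2 * μ * a' + 2 * μ * b' + W + 2 * μ * e := by
  have h2 := mul_le_mul_of_nonneg_left h (by linarith : (0:ℝ) ≤ 2 * μ)
  have e1 : 2 * μ * (a + b + V / (2 * μ)) = 2 * μ * a + 2 * μ * b + V := by
    field_simp
  have e2 : 2 * μ * (a' + b' + W / (2 * μ) + e) = 2 * μ * a' + 2 * μ * b' + W + 2 * μ * e := by
    field_simp
  rw [e1, e2] at h2
  exact h2

private lemma abs_bound_of_tendsto {u : ℕ → ℝ} {a : ℝ}
    (h : Filter.Tendsto u Filter.atTop (nhds a)) : ∃ M : ℝ, ∀ k, |u k| ≤ M := by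
  obtain ⟨M, hM⟩ := h.abs.bddAbove_range
  exact ⟨M, fun k => hM (Set.mem_range_self k)⟩

set_option maxHeartbeats 1000000 in
theorem statement11 {n m : ℕ}
    (f : Euc n → ℝ) (c : Euc n → Euc m) (g : Euc m → EReal)
    (hf : ContDiff ℝ 2 f) (hc : ContDiff ℝ 2 c)
    (hgp : ProperFn g) (hglsc : LowerSemicontinuous g) (hgpb : ProxBounded g)
    (hphi : ∃ r : ℝ, (⨅ x : Euc n, ((f x : EReal) + g (c x))) = (r : EReal))
    (A : ALMSeq n m f c g)
    (hεbdd : ∃ C : ℝ, ∀ k, A.ε k ≤ C)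
    (hdomcl : IsClosed (edom g))
    (hglobal : ∀ k, ∀ x : Euc n,
      ALfun f c g (A.μ k) (A.x k) (A.yhat k) ≤
        ALfun f c g (A.μ k) x (A.yhat k) + (A.ε k : EReal))
    (xbar : Euc n) (K : ℕ → ℕ) (hK : StrictMono K)
    (hacc : Tendsto (fun k => A.x (K k)) atTop (𝓝 xbar)) :
    (∀ x : Euc n, Metric.infDist (c xbar) (edom g) ≤ Metric.infDist (c x) (edom g)) ∧
      ((∃ x : Euc n, c x ∈ edom g) → c xbar ∈ edom g) := by
  classical
  obtain ⟨z₀, hz₀⟩ := hgp.2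
  obtain ⟨C, hC⟩ := hεbdd
  obtain ⟨μpb, hμpb, b, hb⟩ := hgpb
  obtain ⟨CY, hCY⟩ := isBounded_iff_forall_norm_le.mp A.hYbdd
  set MY : ℝ := max CY 0 with hMYdef
  have hMY : ∀ k, ‖A.yhat k‖ ≤ MY := fun k => (hCY _ (A.hyhatY k)).trans (le_max_left _ _)
  have hMY0 : 0 ≤ MY := le_max_right _ _
  have hμpos : ∀ k, 0 < A.μ k := fun k => (A.hμthr k).1
  have hμanti : Antitone A.μ := by
    apply antitone_nat_of_succ_le
    intro k
    rw [A.hμupd k]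
    split_ifs with h
    · exact le_rfl
    · nlinarith [hμpos k, A.hκ.1, A.hκ.2]
  -- z k lies in the domain of g with real value gz k
  have hztop : ∀ k, g (A.z k) ≠ ⊤ := by
    intro k
    have h0 := A.hprox k z₀
    have hz₀r : g z₀ = (((g z₀).toReal : ℝ) : EReal) := (EReal.coe_toReal hz₀.ne (hgp.1 z₀)).symm
    have hq : (0:ℝ) ≤ ‖A.z k - (c (A.x k) + A.μ k • A.yhat k)‖ ^ 2 / (2 * A.μ k) :=
      div_nonneg (by positivity) (by linarith [hμpos k])
    have h1 : g (A.z k) ≤ g (A.z k) +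
        ((‖A.z k - (c (A.x k) + A.μ k • A.yhat k)‖ ^ 2 / (2 * A.μ k) : ℝ) : EReal) :=
      le_add_of_nonneg_right (by exact_mod_cast hq)
    have h2 : g z₀ + ((‖z₀ - (c (A.x k) + A.μ k • A.yhat k)‖ ^ 2 / (2 * A.μ k) : ℝ) : EReal) =
        (((g z₀).toReal + ‖z₀ - (c (A.x k) + A.μ k • A.yhat k)‖ ^ 2 / (2 * A.μ k) : ℝ) : EReal) := by
      rw [hz₀r]; norm_cast
    exact ne_top_of_le_ne_top (EReal.coe_ne_top _) (h1.trans (h0.trans_eq h2))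
  set gz : ℕ → ℝ := fun k => (g (A.z k)).toReal with hgzdef
  have hgz : ∀ k, g (A.z k) = ((gz k : ℝ) : EReal) := fun k =>
    (EReal.coe_toReal (hztop k) (hgp.1 _)).symm
  have hzdom : ∀ k, A.z k ∈ edom g := fun k => lt_top_iff_ne_top.mpr (hztop k)
  have hdomne : (edom g).Nonempty := ⟨z₀, hz₀⟩
  -- Moreau envelope at the iterate
  have hmor : ∀ k, moreau g (A.μ k) (c (A.x k) + A.μ k • A.yhat k) =
      ((gz k + ‖A.z k - (c (A.x k) + A.μ k • A.yhat k)‖ ^ 2 / (2 * A.μ k) : ℝ) : EReal) := by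
    intro k
    apply le_antisymm
    · refine (iInf_le _ (A.z k)).trans_eq ?_
      rw [hgz k]; norm_cast
    · refine le_iInf fun w' => ?_
      calc ((gz k + ‖A.z k - (c (A.x k) + A.μ k • A.yhat k)‖ ^ 2 / (2 * A.μ k) : ℝ) : EReal)
          = g (A.z k) + ((‖A.z k - (c (A.x k) + A.μ k • A.yhat k)‖ ^ 2 / (2 * A.μ k) : ℝ) : EReal) := by
            rw [hgz k]; norm_cast
        _ ≤ _ := A.hprox k w'
  -- the key real inequality from global optimality
  have hkey : ∀ k, ∀ x' : Euc n, ∀ w' : Euc m, w' ∈ edom g →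
      f (A.x k) + gz k + ‖A.z k - (c (A.x k) + A.μ k • A.yhat k)‖ ^ 2 / (2 * A.μ k) ≤
      f x' + (g w').toReal + ‖w' - (c x' + A.μ k • A.yhat k)‖ ^ 2 / (2 * A.μ k) + A.ε k := by
    intro k x' w' hw'
    have hw'lt : g w' < ⊤ := hw'
    have hgw' : g w' = (((g w').toReal : ℝ) : EReal) := (EReal.coe_toReal hw'lt.ne (hgp.1 w')).symm
    have h1 := hglobal k x'
    simp only [ALfun] at h1
    rw [hmor k] at h1
    have h2 : moreau g (A.μ k) (c x' + A.μ k • A.yhat k) ≤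
        (((g w').toReal + ‖w' - (c x' + A.μ k • A.yhat k)‖ ^ 2 / (2 * A.μ k) : ℝ) : EReal) := by
      refine (iInf_le _ w').trans_eq ?_
      rw [hgw']; norm_cast
    have h3 : (f x' : EReal) + moreau g (A.μ k) (c x' + A.μ k • A.yhat k) -
          ((A.μ k / 2 * ‖A.yhat k‖ ^ 2 : ℝ) : EReal) + (A.ε k : EReal) ≤
        ((f x' + ((g w').toReal + ‖w' - (c x' + A.μ k • A.yhat k)‖ ^ 2 / (2 * A.μ k)) -
          A.μ k / 2 * ‖A.yhat k‖ ^ 2 + A.ε k : ℝ) : EReal) := by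
      have h4 := add_le_add_right h2 (f x' : EReal)
      have h5 := EReal.sub_le_sub h4 (le_refl ((A.μ k / 2 * ‖A.yhat k‖ ^ 2 : ℝ) : EReal))
      have h6 := add_le_add_left h5 (A.ε k : EReal)
      refine h6.trans_eq ?_
      norm_cast
    have hfinal : ((f (A.x k) + (gz k + ‖A.z k - (c (A.x k) + A.μ k • A.yhat k)‖ ^ 2 / (2 * A.μ k)) -
          A.μ k / 2 * ‖A.yhat k‖ ^ 2 : ℝ) : EReal) ≤
        ((f x' + ((g w').toReal + ‖w' - (c x' + A.μ k • A.yhat k)‖ ^ 2 / (2 * A.μ k)) -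
          A.μ k / 2 * ‖A.yhat k‖ ^ 2 + A.ε k : ℝ) : EReal) := by
      calc ((f (A.x k) + (gz k + ‖A.z k - (c (A.x k) + A.μ k • A.yhat k)‖ ^ 2 / (2 * A.μ k)) -
              A.μ k / 2 * ‖A.yhat k‖ ^ 2 : ℝ) : EReal)
          = (f (A.x k) : EReal) +
            ((gz k + ‖A.z k - (c (A.x k) + A.μ k • A.yhat k)‖ ^ 2 / (2 * A.μ k) : ℝ) : EReal) -
            ((A.μ k / 2 * ‖A.yhat k‖ ^ 2 : ℝ) : EReal) := by norm_cast
        _ ≤ (f x' : EReal) + moreau g (A.μ k) (c x' + A.μ k • A.yhat k) -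
            ((A.μ k / 2 * ‖A.yhat k‖ ^ 2 : ℝ) : EReal) + (A.ε k : EReal) := h1
        _ ≤ _ := h3
    rw [EReal.coe_le_coe_iff] at hfinal
    linarith
  -- convergence of infDist along the subsequence
  have hcK : Tendsto (fun k => c (A.x (K k))) atTop (𝓝 (c xbar)) :=
    ((hc.continuous.tendsto xbar).comp hacc)
  have hLHS : Tendsto (fun k => Metric.infDist (c (A.x (K k))) (edom g)) atTop
      (𝓝 (Metric.infDist (c xbar) (edom g))) :=
    ((Metric.continuous_infDist_pt (edom g)).tendsto (c xbar)).comp hcK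
  suffices h1 : ∀ x : Euc n, Metric.infDist (c xbar) (edom g) ≤ Metric.infDist (c x) (edom g) by
    refine ⟨h1, fun hex => ?_⟩
    obtain ⟨x0, hx0⟩ := hex
    have h2 : Metric.infDist (c xbar) (edom g) ≤ 0 :=
      (h1 x0).trans_eq (Metric.infDist_zero_of_mem hx0)
    exact (hdomcl.mem_iff_infDist_zero hdomne).mpr (le_antisymm h2 Metric.infDist_nonneg)
  by_cases hA : ∃ k0, ∀ k ≥ k0, ‖c (A.x (k+1)) - A.z (k+1)‖ ≤ A.θ * ‖c (A.x k) - A.z k‖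
  · -- Case A : V contracts geometrically, so infDist → 0
    obtain ⟨k0, hk0⟩ := hA
    have hVgeo : ∀ j, ‖c (A.x (k0 + j)) - A.z (k0 + j)‖ ≤
        A.θ ^ j * ‖c (A.x k0) - A.z k0‖ := by
      intro j
      induction j with
      | zero => simp
      | succ j ih =>
        have h2 := hk0 (k0 + j) (Nat.le_add_right _ _)
        have h3 : A.θ * (A.θ ^ j * ‖c (A.x k0) - A.z k0‖) =
            A.θ ^ (j+1) * ‖c (A.x k0) - A.z k0‖ := by ring
        calc ‖c (A.x (k0 + (j+1))) - A.z (k0 + (j+1))‖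
            = ‖c (A.x ((k0 + j) + 1)) - A.z ((k0 + j) + 1)‖ := by ring_nf
          _ ≤ A.θ * ‖c (A.x (k0 + j)) - A.z (k0 + j)‖ := h2
          _ ≤ A.θ * (A.θ ^ j * ‖c (A.x k0) - A.z k0‖) :=
              mul_le_mul_of_nonneg_left ih A.hθ.1.le
          _ = _ := h3
    have hV0 : Tendsto (fun k => ‖c (A.x k) - A.z k‖) atTop (𝓝 0) := by
      apply squeeze_zero' (Eventually.of_forall fun k => norm_nonneg _)
        (g := fun k => A.θ ^ (k - k0) * ‖c (A.x k0) - A.z k0‖)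
      · filter_upwards [eventually_ge_atTop k0] with k hk
        have := hVgeo (k - k0)
        rwa [Nat.add_sub_cancel' hk] at this
      · have h1 : Tendsto (fun j : ℕ => A.θ ^ j * ‖c (A.x k0) - A.z k0‖) atTop (𝓝 0) := by
          simpa using (tendsto_pow_atTop_nhds_zero_of_lt_one A.hθ.1.le A.hθ.2).mul_const
            ‖c (A.x k0) - A.z k0‖
        exact h1.comp (tendsto_sub_atTop_nat k0)
    have h0 : Tendsto (fun k => Metric.infDist (c (A.x (K k))) (edom g)) atTop (𝓝 0) := by
      apply squeeze_zero (fun k => Metric.infDist_nonneg)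
        (fun k => (Metric.infDist_le_dist_of_mem (hzdom (K k))).trans_eq (dist_eq_norm _ _))
      exact hV0.comp hK.tendsto_atTop
    have hzero : Metric.infDist (c xbar) (edom g) = 0 := tendsto_nhds_unique hLHS h0
    intro x
    rw [hzero]
    exact Metric.infDist_nonneg
  · -- Case B : μ → 0
    push_neg at hA
    have hclaim : ∀ j : ℕ, ∃ k, A.μ k ≤ A.κ ^ j * A.μ 0 := by
      intro j
      induction j with
      | zero => exact ⟨0, by simp⟩
      | succ j ih =>
        obtain ⟨k, hk⟩ := ih
        obtain ⟨k', hk', hV⟩ := hA k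
        refine ⟨k' + 2, ?_⟩
        have hupd := A.hμupd (k' + 1)
        rw [if_neg] at hupd
        · have hle : A.μ (k' + 1) ≤ A.μ k := hμanti (by omega)
          calc A.μ (k' + 2) = A.κ * A.μ (k' + 1) := hupd
            _ ≤ A.κ * A.μ k := mul_le_mul_of_nonneg_left hle A.hκ.1.le
            _ ≤ A.κ * (A.κ ^ j * A.μ 0) := mul_le_mul_of_nonneg_left hk A.hκ.1.le
            _ = A.κ ^ (j + 1) * A.μ 0 := by ring
        · simp only [Nat.add_sub_cancel]
          rintro (h | h)
          · omega
          · exact absurd h (not_le.mpr hV)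
    have hμ0 : Tendsto A.μ atTop (𝓝 0) := by
      rw [Metric.tendsto_atTop]
      intro δ hδ
      have hκ0 : Tendsto (fun j => A.κ ^ j * A.μ 0) atTop (𝓝 0) := by
        simpa using (tendsto_pow_atTop_nhds_zero_of_lt_one A.hκ.1.le A.hκ.2).mul_const (A.μ 0)
      obtain ⟨j, hj⟩ := (hκ0.eventually_lt_const hδ).exists
      obtain ⟨k, hk⟩ := hclaim j
      refine ⟨k, fun n hn => ?_⟩
      rw [Real.dist_eq, sub_zero, abs_of_pos (hμpos n)]
      exact lt_of_le_of_lt ((hμanti hn).trans hk) hj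
    have hμK0 : Tendsto (fun k => A.μ (K k)) atTop (𝓝 0) := hμ0.comp hK.tendsto_atTop
    -- bounds along the subsequence
    obtain ⟨Mf, hMf⟩ := abs_bound_of_tendsto ((hf.continuous.tendsto xbar).comp hacc)
    obtain ⟨Mc, hMc⟩ := abs_bound_of_tendsto hcK.norm
    have hMc' : ∀ k, ‖c (A.x (K k))‖ ≤ Mc := fun k => (le_abs_self _).trans (hMc k)
    have hMc0 : 0 ≤ Mc := (norm_nonneg _).trans (hMc' 0)
    set Mw : ℝ := Mc + A.μ 0 * MY with hMwdef
    have hMw0 : 0 ≤ Mw := by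
      have := hμpos 0
      have : 0 ≤ A.μ 0 * MY := mul_nonneg (hμpos 0).le hMY0
      linarith
    have hwkb : ∀ k, ‖c (A.x (K k)) + A.μ (K k) • A.yhat (K k)‖ ≤ Mw := by
      intro k
      calc ‖c (A.x (K k)) + A.μ (K k) • A.yhat (K k)‖
          ≤ ‖c (A.x (K k))‖ + ‖A.μ (K k) • A.yhat (K k)‖ := norm_add_le _ _
        _ ≤ Mc + A.μ 0 * MY := by
            have h1 : ‖A.μ (K k) • A.yhat (K k)‖ = A.μ (K k) * ‖A.yhat (K k)‖ := by
              rw [norm_smul, Real.norm_eq_abs, abs_of_pos (hμpos _)]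
            have h2 : A.μ (K k) * ‖A.yhat (K k)‖ ≤ A.μ 0 * MY :=
              mul_le_mul (hμanti (Nat.zero_le _)) (hMY _) (norm_nonneg _) (hμpos 0).le
            have := hMc' k
            linarith
    have hC₀ : ∀ k, A.ε k ≤ max C 0 := fun k => (hC k).trans (le_max_left _ _)
    have hbz : ∀ k, b ≤ gz k + ‖A.z k‖ ^ 2 / (2 * μpb) := by
      intro k
      have h1 := hb (A.z k)
      rw [hgz k] at h1
      exact_mod_cast h1
    -- fix x and the nearest domain point w
    intro x
    obtain ⟨w, hw, hdw⟩ := hdomcl.exists_infDist_eq_dist hdomne (c x)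
    set d : ℝ := dist (c x) w with hddef
    have hd0 : 0 ≤ d := dist_nonneg
    set S : ℝ := f x + Mf + (g w).toReal - b + Mw ^ 2 / μpb + max C 0 with hSdef
    set S' : ℝ := max S 0 with hS'def
    set F : ℝ → ℝ := fun t =>
      Real.sqrt ((2 * t * S' + (d + t * MY) ^ 2) / (1 - 2 * t / μpb)) + t * MY with hFdef
    have hF0 : F 0 = d := by
      simp only [hFdef]
      norm_num
      rw [Real.sqrt_sq hd0]
    have hFc : ContinuousAt F 0 := by
      apply ContinuousAt.add
      · apply Real.continuous_sqrt.continuousAt.comp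
        apply ContinuousAt.div
        · fun_prop
        · fun_prop
        · norm_num
      · fun_prop
    have hRHS : Tendsto (fun k => F (A.μ (K k))) atTop (𝓝 d) := by
      rw [← hF0]
      exact hFc.tendsto.comp hμK0
    have hest : ∀ᶠ k in atTop,
        Metric.infDist (c (A.x (K k))) (edom g) ≤ F (A.μ (K k)) := by
      filter_upwards [hμK0.eventually_le_const (show (0:ℝ) < μpb / 4 by linarith)] with k hk
      set j := K k with hjdef
      have hμj : 0 < A.μ j := hμpos j
      have hsm : 4 * A.μ j ≤ μpb := by
        have : A.μ j ≤ μpb / 4 := hk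
        linarith
      have h1 := hkey j x w hw
      have h2 := mul2mu hμj h1
      set V : ℝ := ‖A.z j - (c (A.x j) + A.μ j • A.yhat j)‖ with hVdef
      have hVnn : 0 ≤ V := norm_nonneg _
      have hW : ‖w - (c x + A.μ j • A.yhat j)‖ ≤ d + A.μ j * MY := by
        have he : w - (c x + A.μ j • A.yhat j) = (w - c x) - A.μ j • A.yhat j := by abel
        rw [he]
        refine (norm_sub_le _ _).trans ?_
        have e1 : ‖w - c x‖ = d := by rw [hddef, dist_eq_norm, norm_sub_rev]
        have e2 : ‖A.μ j • A.yhat j‖ ≤ A.μ j * MY := by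
          rw [norm_smul, Real.norm_eq_abs, abs_of_pos hμj]
          exact mul_le_mul_of_nonneg_left (hMY _) hμj.le
        linarith
      have hW2 : ‖w - (c x + A.μ j • A.yhat j)‖ ^ 2 ≤ (d + A.μ j * MY) ^ 2 :=
        pow_le_pow_left₀ (norm_nonneg _) hW 2
      have hzn : ‖A.z j‖ ≤ V + Mw := by
        have he : A.z j = (A.z j - (c (A.x j) + A.μ j • A.yhat j)) +
            (c (A.x j) + A.μ j • A.yhat j) := by abel
        calc ‖A.z j‖ = ‖(A.z j - (c (A.x j) + A.μ j • A.yhat j)) +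
              (c (A.x j) + A.μ j • A.yhat j)‖ := by rw [← he]
          _ ≤ V + ‖c (A.x j) + A.μ j • A.yhat j‖ := norm_add_le _ _
          _ ≤ V + Mw := by have := hwkb k; rw [← hjdef] at this; linarith
      have hzn2 : ‖A.z j‖ ^ 2 ≤ 2 * V ^ 2 + 2 * Mw ^ 2 := by
        nlinarith [hzn, hVnn, hMw0, norm_nonneg (A.z j), sq_nonneg (V - Mw)]
      have hfj : -Mf ≤ f (A.x j) := by
        have h3 := hMf k
        simp only [Function.comp] at h3
        show -Mf ≤ f (A.x (K k))
        linarith [abs_le.mp h3]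
      have hεj : A.ε j ≤ max C 0 := hC₀ j
      have hgzb : b - ‖A.z j‖ ^ 2 / (2 * μpb) ≤ gz j := by linarith [hbz j]
      have hden : (1:ℝ) / 2 ≤ 1 - 2 * A.μ j / μpb := by
        have h3 : 2 * A.μ j / μpb ≤ 1 / 2 := by
          rw [div_le_div_iff₀ hμpb (by norm_num : (0:ℝ) < 2)]
          linarith
        linarith
      have hE1 : V ^ 2 * (1 - 2 * A.μ j / μpb) ≤ 2 * A.μ j * S' + (d + A.μ j * MY) ^ 2 := by
        have hS'l : f x + Mf + (g w).toReal - b + Mw ^ 2 / μpb + max C 0 ≤ S' := by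
          rw [hS'def, hSdef]; exact le_max_left _ _
        have p1 : 2 * A.μ j * (b - ‖A.z j‖ ^ 2 / (2 * μpb)) ≤ 2 * A.μ j * gz j :=
          mul_le_mul_of_nonneg_left hgzb (by linarith)
        have p2 : 2 * A.μ j * (-Mf) ≤ 2 * A.μ j * f (A.x j) :=
          mul_le_mul_of_nonneg_left hfj (by linarith)
        have p3 : 2 * A.μ j * A.ε j ≤ 2 * A.μ j * max C 0 :=
          mul_le_mul_of_nonneg_left hεj (by linarith)
        have p4 : A.μ j / μpb * ‖A.z j‖ ^ 2 ≤ A.μ j / μpb * (2 * V ^ 2 + 2 * Mw ^ 2) :=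
          mul_le_mul_of_nonneg_left hzn2 (by positivity)
        have p5 : 2 * A.μ j * (‖A.z j‖ ^ 2 / (2 * μpb)) = A.μ j / μpb * ‖A.z j‖ ^ 2 := by
          field_simp
        have p6 : A.μ j / μpb * (2 * V ^ 2 + 2 * Mw ^ 2) =
            V ^ 2 * (2 * A.μ j / μpb) + 2 * A.μ j * (Mw ^ 2 / μpb) := by
          field_simp
        have p7 : 2 * A.μ j * (f x + Mf + (g w).toReal - b + Mw ^ 2 / μpb + max C 0) ≤
            2 * A.μ j * S' := mul_le_mul_of_nonneg_left hS'l (by linarith)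
        linarith [h2, p1, p2, p3, p4, p5, p6, p7, hW2]
      have hE2 : V ^ 2 ≤ (2 * A.μ j * S' + (d + A.μ j * MY) ^ 2) / (1 - 2 * A.μ j / μpb) := by
        rw [le_div_iff₀ (by linarith : (0:ℝ) < 1 - 2 * A.μ j / μpb)]
        exact hE1
      have hV' : V ≤ Real.sqrt ((2 * A.μ j * S' + (d + A.μ j * MY) ^ 2) /
          (1 - 2 * A.μ j / μpb)) := by
        have h3 := Real.sqrt_le_sqrt hE2
        rwa [Real.sqrt_sq hVnn] at h3
      calc Metric.infDist (c (A.x j)) (edom g)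
          ≤ dist (c (A.x j)) (A.z j) := Metric.infDist_le_dist_of_mem (hzdom j)
        _ = ‖c (A.x j) - A.z j‖ := dist_eq_norm _ _
        _ ≤ V + A.μ j * MY := by
            have he : c (A.x j) - A.z j =
                -(A.z j - (c (A.x j) + A.μ j • A.yhat j)) - A.μ j • A.yhat j := by abel
            rw [he]
            refine (norm_sub_le _ _).trans ?_
            have e2 : ‖A.μ j • A.yhat j‖ ≤ A.μ j * MY := by
              rw [norm_smul, Real.norm_eq_abs, abs_of_pos hμj]
              exact mul_le_mul_of_nonneg_left (hMY _) hμj.le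
            rw [norm_neg]
            linarith
        _ ≤ F (A.μ j) := by
            simp only [hFdef]
            have := add_le_add_left hV' (A.μ j * MY)
            exact this
    have hfin := le_of_tendsto_of_tendsto hLHS hRHS hest
    rw [hdw]
    exact hfin

end Paper
end
end

section
/- Let {(x^k, z^k, y^k)} be a sequence generated by the safeguarded implicit augmented Lagrangian algorithm for problem (P) with ε_k → 0. Assume the approximate global optimality condition L_{μ_k}(x^k, ŷ^k) ≤ L_{μ_k}(x, ŷ^k) + ε_k for all x ∈ ℝ^n and all k, that the feasible set of (P) is nonempty, and that dom g is closed. Then limsup_{k→∞} ( f(x^k) + g(z^k) ) ≤ φ(x) for every feasible x. Moreover, every accumulation point x̄ of {x^k} is a global minimizer of (P), and for any infinite index set K ⊆ ℕ with x^k → x̄ along K one also has z^k → c(x̄) and f(x^k) + g(z^k) → φ(x̄) along K. -/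
open Filter Topology Bornology

noncomputable section

namespace Paper

variable {n m : ℕ}

private lemma geom_tendsto_zero {V : ℕ → ℝ} {θ : ℝ} (hθ0 : 0 ≤ θ) (hθ1 : θ < 1)
    (hVnn : ∀ k, 0 ≤ V k) {N : ℕ} (h : ∀ k, N ≤ k → V (k + 1) ≤ θ * V k) :
    Filter.Tendsto V Filter.atTop (𝓝 0) := by
  have key : ∀ j, V (N + j) ≤ θ ^ j * V N := by
    intro j; induction j with
    | zero => simp
    | succ j ih =>
      have h2 := h (N + j) (Nat.le_add_right _ _)
      have h3 : V (N + (j + 1)) = V ((N + j) + 1) := by ring_nf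
      rw [h3]
      calc V ((N + j) + 1) ≤ θ * V (N + j) := h2
        _ ≤ θ * (θ ^ j * V N) := by nlinarith [hVnn (N + j)]
        _ = θ ^ (j + 1) * V N := by ring
  rw [← tendsto_add_atTop_iff_nat N]
  have hb : Filter.Tendsto (fun j => θ ^ j * V N) Filter.atTop (𝓝 0) := by
    simpa using (tendsto_pow_atTop_nhds_zero_of_lt_one hθ0 hθ1).mul_const (V N)
  apply tendsto_of_tendsto_of_tendsto_of_le_of_le' tendsto_const_nhds hb
  · exact Filter.Eventually.of_forall fun j => hVnn _
  · exact Filter.Eventually.of_forall fun j => by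
      simpa [Nat.add_comm] using key j

private lemma quad_bound {W μ C M : ℝ} (hμ : 0 < μ) (hM : 0 ≤ M) (hW : 0 ≤ W)
    (h : W ^ 2 ≤ 4 * μ * C + 4 * μ * M * W) :
    W ≤ max (8 * μ * M) (Real.sqrt (8 * μ * C)) := by
  by_contra hcon
  push_neg at hcon
  rw [max_lt_iff] at hcon
  obtain ⟨h1, h2⟩ := hcon
  have hW0 : 0 < W := lt_of_le_of_lt (by positivity) h1
  have h3 : 8 * μ * C < W ^ 2 := (Real.sqrt_lt' hW0).1 h2
  nlinarith

set_option maxHeartbeats 2000000 in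
theorem statement12 {n m : ℕ}
    (f : Euc n → ℝ) (c : Euc n → Euc m) (g : Euc m → EReal)
    (hf : ContDiff ℝ 2 f) (hc : ContDiff ℝ 2 c)
    (hgp : ProperFn g) (hglsc : LowerSemicontinuous g) (hgpb : ProxBounded g)
    (hphi : ∃ r : ℝ, (⨅ x : Euc n, ((f x : EReal) + g (c x))) = (r : EReal))
    (A : ALMSeq n m f c g)
    (hε0 : Tendsto A.ε atTop (𝓝 0))
    (hglobal : ∀ k, ∀ x : Euc n,
      ALfun f c g (A.μ k) (A.x k) (A.yhat k) ≤
        ALfun f c g (A.μ k) x (A.yhat k) + (A.ε k : EReal))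
    (hfeas : ∃ x : Euc n, c x ∈ edom g)
    (hdomcl : IsClosed (edom g)) :
    (∀ x : Euc n, c x ∈ edom g →
      limsup (fun k => (f (A.x k) : EReal) + g (A.z k)) atTop ≤ (f x : EReal) + g (c x)) ∧
    (∀ (xbar : Euc n) (K : ℕ → ℕ), StrictMono K →
      Tendsto (fun k => A.x (K k)) atTop (𝓝 xbar) →
        c xbar ∈ edom g ∧
        (∀ x : Euc n, (f xbar : EReal) + g (c xbar) ≤ (f x : EReal) + g (c x)) ∧
        Tendsto (fun k => A.z (K k)) atTop (𝓝 (c xbar)) ∧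
        Tendsto (fun k => (f (A.x (K k)) : EReal) + g (A.z (K k))) atTop
          (𝓝 ((f xbar : EReal) + g (c xbar)))) := by
  -- setup
  obtain ⟨x₀, hx₀⟩ := hfeas
  have hμpos : ∀ k, 0 < A.μ k := fun k => (A.hμthr k).1
  obtain ⟨M₀, hM₀⟩ := isBounded_iff_forall_norm_le.1 A.hYbdd
  obtain ⟨M, hM0, hMy⟩ : ∃ M : ℝ, 0 ≤ M ∧ ∀ k, ‖A.yhat k‖ ≤ M :=
    ⟨max M₀ 0, le_max_right _ _,
      fun k => le_trans (hM₀ _ (A.hyhatY k)) (le_max_left _ _)⟩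
  have hgb : ∀ w : Euc m, g w ≠ ⊥ := hgp.1
  -- g (z k) is real
  have hgzt : ∀ k, g (A.z k) < ⊤ := by
    intro k
    by_contra h
    have h1 : g (A.z k) = ⊤ := top_le_iff.1 (not_lt.1 h)
    have h2 := A.hprox k (c x₀)
    rw [h1, EReal.top_add_of_ne_bot (EReal.coe_ne_bot _)] at h2
    exact absurd (top_le_iff.1 h2)
      (EReal.add_lt_top (LT.lt.ne hx₀) (EReal.coe_lt_top _).ne).ne
  set G : ℕ → ℝ := fun k => (g (A.z k)).toReal with hGdef
  have hG : ∀ k, ((G k : ℝ) : EReal) = g (A.z k) := fun k =>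
    EReal.coe_toReal (hgzt k).ne (hgb _)
  set V : ℕ → ℝ := fun k => ‖c (A.x k) - A.z k‖ with hVdef
  set D : ℕ → ℝ := fun k => ‖A.z k - (c (A.x k) + A.μ k • A.yhat k)‖ ^ 2 / (2 * A.μ k)
    with hDdef
  set q : ℕ → ℝ := fun k => D k - A.μ k / 2 * ‖A.yhat k‖ ^ 2 with hqdef
  -- Moreau envelope value at the prox point
  have hmor : ∀ k, moreau g (A.μ k) (c (A.x k) + A.μ k • A.yhat k)
      = ((G k + D k : ℝ) : EReal) := by
    intro k
    have hDk : D k = ‖A.z k - (c (A.x k) + A.μ k • A.yhat k)‖ ^ 2 / (2 * A.μ k) := by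
      rw [hDdef]
    apply le_antisymm
    · unfold moreau
      refine le_trans (iInf_le _ (A.z k)) ?_
      rw [← hG k, ← EReal.coe_add, hDk]
    · unfold moreau
      apply le_iInf
      intro w
      refine le_trans ?_ (A.hprox k w)
      rw [← hG k, ← EReal.coe_add, hDk]
  -- master inequality
  have master : ∀ x : Euc n, c x ∈ edom g → ∀ k,
      f (A.x k) + G k + q k ≤ f x + (g (c x)).toReal + A.ε k := by
    intro x hx k
    have hgx : ((g (c x)).toReal : EReal) = g (c x) := EReal.coe_toReal (LT.lt.ne hx) (hgb _)
    have hμk := hμpos k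
    have hqk : q k = D k - A.μ k / 2 * ‖A.yhat k‖ ^ 2 := by rw [hqdef]
    have hL : ALfun f c g (A.μ k) (A.x k) (A.yhat k)
        = ((f (A.x k) + (G k + D k) - A.μ k / 2 * ‖A.yhat k‖ ^ 2 : ℝ) : EReal) := by
      unfold ALfun
      rw [hmor k, ← EReal.coe_add, ← EReal.coe_sub]
    have hnorm : ‖c x - (c x + A.μ k • A.yhat k)‖ ^ 2 / (2 * A.μ k)
        = A.μ k / 2 * ‖A.yhat k‖ ^ 2 := by
      have h0 : c x - (c x + A.μ k • A.yhat k) = -(A.μ k • A.yhat k) := by abel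
      rw [h0, norm_neg, norm_smul, Real.norm_eq_abs, abs_of_pos hμk, mul_pow]
      field_simp
    have hR : ALfun f c g (A.μ k) x (A.yhat k) ≤ ((f x + (g (c x)).toReal : ℝ) : EReal) := by
      have h1 : moreau g (A.μ k) (c x + A.μ k • A.yhat k)
          ≤ (((g (c x)).toReal + A.μ k / 2 * ‖A.yhat k‖ ^ 2 : ℝ) : EReal) := by
        unfold moreau
        refine le_trans (iInf_le _ (c x)) ?_
        rw [hnorm, EReal.coe_add, hgx]
      unfold ALfun
      calc (f x : EReal) + moreau g (A.μ k) (c x + A.μ k • A.yhat k)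
            - ((A.μ k / 2 * ‖A.yhat k‖ ^ 2 : ℝ) : EReal)
          ≤ (f x : EReal) + (((g (c x)).toReal + A.μ k / 2 * ‖A.yhat k‖ ^ 2 : ℝ) : EReal)
            - ((A.μ k / 2 * ‖A.yhat k‖ ^ 2 : ℝ) : EReal) :=
            EReal.sub_le_sub (add_le_add_right h1 _) le_rfl
        _ = ((f x + (g (c x)).toReal : ℝ) : EReal) := by
            rw [← EReal.coe_add, ← EReal.coe_sub, EReal.coe_eq_coe_iff]
            ring
    have h3 := le_trans (hglobal k x) (add_le_add_left hR _)
    rw [hL, ← EReal.coe_add, EReal.coe_le_coe_iff] at h3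
    rw [hqk]; linarith
  -- expansion of q
  have hqkey : ∀ k, q k = V k ^ 2 / (2 * A.μ k)
      - inner ℝ (A.z k - c (A.x k)) (A.yhat k) := by
    intro k
    have hμ := hμpos k
    have h0 : A.z k - (c (A.x k) + A.μ k • A.yhat k)
        = (A.z k - c (A.x k)) - A.μ k • A.yhat k := by abel
    simp only [hqdef, hDdef, hVdef]
    rw [h0, norm_sub_sq_real, real_inner_smul_right, norm_smul, Real.norm_eq_abs,
      abs_of_pos hμ, norm_sub_rev]
    set i : ℝ := inner ℝ (A.z k - c (A.x k)) (A.yhat k)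
    field_simp
    ring
  have hinner : ∀ k, (inner ℝ (A.z k - c (A.x k)) (A.yhat k) : ℝ) ≤ V k * M := by
    intro k
    have hnorm_eq : ‖A.z k - c (A.x k)‖ = V k := by
      rw [hVdef]; exact norm_sub_rev _ _
    calc (inner ℝ (A.z k - c (A.x k)) (A.yhat k) : ℝ)
        ≤ ‖A.z k - c (A.x k)‖ * ‖A.yhat k‖ := real_inner_le_norm _ _
      _ ≤ V k * M :=
          mul_le_mul hnorm_eq.le (hMy k) (norm_nonneg _) (hnorm_eq ▸ norm_nonneg _)
  have hql1 : ∀ k, V k ^ 2 / (2 * A.μ k) - M * V k ≤ q k := by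
    intro k
    have h1 := hinner k
    rw [hqkey k]
    have h4 : 0 ≤ V k ^ 2 / (2 * A.μ k) :=
      div_nonneg (sq_nonneg _) (by linarith [hμpos k])
    nlinarith
  have hql2 : ∀ k, -(A.μ k / 2 * M ^ 2) ≤ q k := by
    intro k
    have h1 := hinner k
    have hVnn : 0 ≤ V k := norm_nonneg _
    have hμ := hμpos k
    rw [hqkey k]
    have h2 : 0 ≤ (V k - A.μ k * M) ^ 2 / (2 * A.μ k) :=
      div_nonneg (sq_nonneg _) (by linarith)
    have h3 : (V k - A.μ k * M) ^ 2 / (2 * A.μ k)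
        = V k ^ 2 / (2 * A.μ k) - V k * M + A.μ k / 2 * M ^ 2 := by
      field_simp; ring
    linarith
  have hVnn : ∀ k, 0 ≤ V k := by
    intro k; simp only [hVdef]; exact norm_nonneg _
  clear_value G V D q
  -- penalty parameter facts
  have hμanti : Antitone A.μ := by
    apply antitone_nat_of_succ_le
    intro k
    rw [A.hμupd k]
    split
    · exact le_rfl
    · nlinarith [hμpos k, A.hκ.1, A.hκ.2]
  -- dichotomy
  have dich : Tendsto A.μ atTop (𝓝 0) ∨ Tendsto V atTop (𝓝 0) := by
    by_cases hred : ∀ N, ∃ k, N ≤ k ∧ A.μ (k + 1) ≠ A.μ k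
    · left
      have hstep : ∀ j : ℕ, ∃ N, A.μ N ≤ A.κ ^ j * A.μ 0 := by
        intro j
        induction j with
        | zero => exact ⟨0, by simp⟩
        | succ j ih =>
          obtain ⟨N, hN⟩ := ih
          obtain ⟨k, hk, hne⟩ := hred N
          have h1 : A.μ (k + 1) = A.κ * A.μ k := by
            have h2 := A.hμupd k
            split at h2
            · exact absurd h2 hne
            · exact h2
          refine ⟨k + 1, ?_⟩
          rw [h1]
          have h4 : A.μ k ≤ A.κ ^ j * A.μ 0 := le_trans (hμanti hk) hN
          calc A.κ * A.μ k ≤ A.κ * (A.κ ^ j * A.μ 0) := by nlinarith [A.hκ.1]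
            _ = A.κ ^ (j + 1) * A.μ 0 := by ring
      rw [tendsto_order]
      constructor
      · intro b hb
        exact Filter.Eventually.of_forall fun k => lt_trans hb (hμpos k)
      · intro b hb
        have h5 : Tendsto (fun j => A.κ ^ j * A.μ 0) atTop (𝓝 0) := by
          simpa using
            (tendsto_pow_atTop_nhds_zero_of_lt_one A.hκ.1.le A.hκ.2).mul_const (A.μ 0)
        obtain ⟨j, hj⟩ := (h5.eventually (gt_mem_nhds hb)).exists
        obtain ⟨N, hN⟩ := hstep j
        rw [eventually_atTop]
        exact ⟨N, fun k hk => lt_of_le_of_lt (le_trans (hμanti hk) hN) hj⟩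
    · right
      push_neg at hred
      obtain ⟨N, hN⟩ := hred
      have hstep2 : ∀ k, N ≤ k → V (k + 1) ≤ A.θ * V k := by
        intro k hk
        have h2 := A.hμupd (k + 1)
        have h3 := hN (k + 1) (le_trans hk (Nat.le_succ k))
        split at h2
        · rename_i hcond
          rcases hcond with h | h
          · exact absurd h (Nat.succ_ne_zero k)
          · simp only [hVdef]
            simpa using h
        · exfalso
          rw [h3] at h2
          nlinarith [hμpos (k + 1), A.hκ.2, A.hκ.1]
      exact geom_tendsto_zero A.hθ.1.le A.hθ.2 hVnn hstep2
  -- eventual lower bound on q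
  have hq_ev : ∀ δ : ℝ, 0 < δ → ∀ᶠ k in atTop, -δ ≤ q k := by
    intro δ hδ
    rcases dich with h | h
    · have hpos : (0 : ℝ) < 2 * δ / (M ^ 2 + 1) := div_pos (by linarith) (by positivity)
      filter_upwards [h.eventually (gt_mem_nhds hpos)] with k hk
      have h2 := hql2 k
      have hμ := hμpos k
      rw [lt_div_iff₀ (by positivity)] at hk
      nlinarith
    · have hpos : (0 : ℝ) < δ / (M + 1) := div_pos hδ (by linarith)
      filter_upwards [h.eventually (gt_mem_nhds hpos)] with k hk
      have h2 := hql1 k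
      have h4 : 0 ≤ V k ^ 2 / (2 * A.μ k) :=
        div_nonneg (sq_nonneg _) (by linarith [hμpos k])
      rw [lt_div_iff₀ (by linarith)] at hk
      nlinarith [hVnn k]
  set t : ℕ → ℝ := fun k => A.ε k + max 0 (-q k) with htdef
  clear_value t
  have ht : Tendsto t atTop (𝓝 0) := by
    have h2 : Tendsto (fun k => max 0 (-q k)) atTop (𝓝 0) := by
      rw [tendsto_order]
      constructor
      · intro b hb
        exact Filter.Eventually.of_forall fun k => lt_of_lt_of_le hb (le_max_left _ _)
      · intro b hb
        filter_upwards [hq_ev (b / 2) (half_pos hb)] with k hk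
        have h3 : -q k ≤ b / 2 := by linarith
        calc max 0 (-q k) ≤ max 0 (b / 2) := max_le_max le_rfl h3
          _ < b := by rw [max_eq_right (by linarith)]; linarith
    rw [htdef]
    simpa using hε0.add h2
  have masterT : ∀ x : Euc n, c x ∈ edom g → ∀ k,
      f (A.x k) + G k ≤ (f x + (g (c x)).toReal) + t k := by
    intro x hx k
    have h1 := master x hx k
    have h2 : -q k ≤ max 0 (-q k) := le_max_right _ _
    have h3 : t k = A.ε k + max 0 (-q k) := by rw [htdef]
    linarith
  constructor
  · -- statement 1
    intro x hx
    have hgx : ((g (c x)).toReal : EReal) = g (c x) := EReal.coe_toReal (LT.lt.ne hx) (hgb _)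
    have hfun : (fun k => (f (A.x k) : EReal) + g (A.z k))
        = fun k => (((f (A.x k) + G k : ℝ)) : EReal) := by
      funext k; rw [← hG k, ← EReal.coe_add]
    rw [hfun]
    have hle : limsup (fun k => (((f (A.x k) + G k : ℝ)) : EReal)) atTop
        ≤ limsup (fun k => ((((f x + (g (c x)).toReal) + t k : ℝ)) : EReal)) atTop := by
      exact limsup_le_limsup
        (Filter.Eventually.of_forall fun k => EReal.coe_le_coe_iff.2 (masterT x hx k))
    have heq : limsup (fun k => ((((f x + (g (c x)).toReal) + t k : ℝ)) : EReal)) atTop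
        = ((f x + (g (c x)).toReal : ℝ) : EReal) := by
      apply Tendsto.limsup_eq
      rw [EReal.tendsto_coe]
      simpa using tendsto_const_nhds.add ht
    rw [heq] at hle
    rw [EReal.coe_add, hgx] at hle
    exact hle
  · -- part 2
    intro xbar K hK hxK
    have hKtop : Tendsto K atTop atTop := hK.tendsto_atTop
    have hfK : Tendsto (fun k => f (A.x (K k))) atTop (𝓝 (f xbar)) :=
      (hf.continuous.tendsto xbar).comp hxK
    have hcK : Tendsto (fun k => c (A.x (K k))) atTop (𝓝 (c xbar)) :=
      (hc.continuous.tendsto xbar).comp hxK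
    have hW : Tendsto (fun k => V (K k)) atTop (𝓝 0) := by
      rcases dich with hμ0 | hV0
      · obtain ⟨μs, hμs, b, hb⟩ := hgpb
        have hμK : Tendsto (fun k => A.μ (K k)) atTop (𝓝 0) := hμ0.comp hKtop
        obtain ⟨R, hR1, hRpos⟩ : ∃ R : ℝ, R = ‖c xbar‖ + 1 ∧ 0 < R :=
          ⟨‖c xbar‖ + 1, rfl, by positivity⟩
        obtain ⟨C, hC1⟩ : ∃ C : ℝ,
            C = (f x₀ + (g (c x₀)).toReal) + 2 - f xbar - b + 2 * (R ^ 2 / μs) :=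
          ⟨_, rfl⟩
        have hGlb : ∀ k, b - ‖A.z k‖ ^ 2 / (2 * μs) ≤ G k := by
          intro k
          have h1 := hb (A.z k)
          rw [← hG k, ← EReal.coe_add, EReal.coe_le_coe_iff] at h1
          linarith
        have hkey : ∀ᶠ k in atTop,
            V (K k) ≤ max (8 * A.μ (K k) * M) (Real.sqrt (8 * A.μ (K k) * C)) := by
          have e1 : ∀ᶠ k in atTop, f xbar - 1 < f (A.x (K k)) :=
            (tendsto_order.1 hfK).1 _ (by linarith)
          have e2 : ∀ᶠ k in atTop, ‖c (A.x (K k))‖ < R :=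
            hcK.norm.eventually (gt_mem_nhds (by rw [hR1]; linarith))
          have e3 : ∀ᶠ k in atTop, A.ε (K k) < 1 :=
            (hε0.comp hKtop).eventually (gt_mem_nhds one_pos)
          have e4 : ∀ᶠ k in atTop, A.μ (K k) < μs / 4 :=
            hμK.eventually (gt_mem_nhds (by linarith))
          filter_upwards [e1, e2, e3, e4] with k h1 h2 h3 h4
          have hμp : 0 < A.μ (K k) := hμpos (K k)
          have hq1 := hql1 (K k)
          have hq2 := master x₀ hx₀ (K k)
          have hG1 := hGlb (K k)
          have hwnn : 0 ≤ V (K k) := hVnn (K k)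
          have hz : ‖A.z (K k)‖ ≤ R + V (K k) := by
            have h5 : ‖A.z (K k)‖ - ‖c (A.x (K k))‖ ≤ ‖A.z (K k) - c (A.x (K k))‖ :=
              norm_sub_norm_le _ _
            have h6 : ‖A.z (K k) - c (A.x (K k))‖ = V (K k) := by
              rw [hVdef]; exact norm_sub_rev _ _
            linarith
          -- combine the chain into  w^2/(4μ) ≤ M w + C
          have h12 : V (K k) ^ 2 / (2 * A.μ (K k))
              ≤ M * V (K k) + ((f x₀ + (g (c x₀)).toReal) + 2 - f xbar - b)
                + (R + V (K k)) ^ 2 / (2 * μs) := by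
            have h9 : ‖A.z (K k)‖ ^ 2 ≤ (R + V (K k)) ^ 2 := by
              nlinarith [norm_nonneg (A.z (K k))]
            have h10 : ‖A.z (K k)‖ ^ 2 / (2 * μs) ≤ (R + V (K k)) ^ 2 / (2 * μs) :=
              div_le_div_of_nonneg_right h9 (by linarith)
            linarith
          have h13 : (R + V (K k)) ^ 2 / (2 * μs)
              ≤ R ^ 2 / μs + V (K k) ^ 2 / (4 * A.μ (K k)) := by
            have h9 : (R + V (K k)) ^ 2 ≤ 2 * R ^ 2 + 2 * V (K k) ^ 2 := by
              nlinarith [sq_nonneg (R - V (K k))]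
            have h10 : (R + V (K k)) ^ 2 / (2 * μs)
                ≤ (2 * R ^ 2 + 2 * V (K k) ^ 2) / (2 * μs) :=
              div_le_div_of_nonneg_right h9 (by linarith)
            have h11 : (2 * R ^ 2 + 2 * V (K k) ^ 2) / (2 * μs)
                = R ^ 2 / μs + V (K k) ^ 2 / μs := by field_simp
            have h12' : V (K k) ^ 2 / μs ≤ V (K k) ^ 2 / (4 * A.μ (K k)) := by
              exact div_le_div_of_nonneg_left (sq_nonneg _) (by linarith) (by linarith)
            linarith
          have h14 : V (K k) ^ 2 / (2 * A.μ (K k)) - V (K k) ^ 2 / (4 * A.μ (K k))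
              = V (K k) ^ 2 / (4 * A.μ (K k)) := by
            field_simp; ring
          have h15 : V (K k) ^ 2 / (4 * A.μ (K k)) ≤ M * V (K k) + C := by
            have hR2 : 0 ≤ R ^ 2 / μs := div_nonneg (sq_nonneg _) hμs.le
            linarith
          have h16 : V (K k) ^ 2 ≤ 4 * A.μ (K k) * C + 4 * A.μ (K k) * M * V (K k) := by
            rw [div_le_iff₀ (by linarith)] at h15
            nlinarith
          exact quad_bound hμp hM0 hwnn h16
        have hb0 : Tendsto
            (fun k => max (8 * A.μ (K k) * M) (Real.sqrt (8 * A.μ (K k) * C)))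
            atTop (𝓝 0) := by
          have t1 : Tendsto (fun k => 8 * A.μ (K k) * M) atTop (𝓝 0) := by
            simpa using (hμK.const_mul 8).mul_const M
          have t2 : Tendsto (fun k => 8 * A.μ (K k) * C) atTop (𝓝 0) := by
            simpa using (hμK.const_mul 8).mul_const C
          have t3 : Tendsto (fun k => Real.sqrt (8 * A.μ (K k) * C)) atTop (𝓝 0) := by
            have h5 := (Real.continuous_sqrt.tendsto 0).comp t2
            simpa [Function.comp_def] using h5
          simpa using t1.max t3
        exact tendsto_of_tendsto_of_tendsto_of_le_of_le' tendsto_const_nhds hb0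
          (Filter.Eventually.of_forall fun k => hVnn _) hkey
      · exact hV0.comp hKtop
    have hzK : Tendsto (fun k => A.z (K k)) atTop (𝓝 (c xbar)) := by
      have hW' : Tendsto (fun k => ‖c (A.x (K k)) - A.z (K k)‖) atTop (𝓝 0) := by
        simp only [hVdef] at hW; exact hW
      have h1 : Tendsto (fun k => c (A.x (K k)) - A.z (K k)) atTop (𝓝 0) :=
        tendsto_zero_iff_norm_tendsto_zero.2 hW'
      have h2 := hcK.sub h1
      simp only [sub_sub_cancel, sub_zero] at h2
      exact h2
    have hfeasbar : c xbar ∈ edom g :=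
      hdomcl.mem_of_tendsto hzK (Filter.Eventually.of_forall fun k => hgzt (K k))
    have hgbar : ((g (c xbar)).toReal : EReal) = g (c xbar) :=
      EReal.coe_toReal (LT.lt.ne hfeasbar) (hgb _)
    set L : ℝ := f xbar + (g (c xbar)).toReal with hLdef
    clear_value L
    have htK : Tendsto (fun k => t (K k)) atTop (𝓝 0) := ht.comp hKtop
    have haK : Tendsto (fun k => f (A.x (K k)) + G (K k)) atTop (𝓝 L) := by
      rw [tendsto_order]
      constructor
      · intro b hb
        have hδ : 0 < (L - b) / 2 := by linarith
        have ev1 : ∀ᶠ k in atTop, f xbar - (L - b) / 2 < f (A.x (K k)) :=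
          (tendsto_order.1 hfK).1 _ (by linarith)
        have hlt : (((g (c xbar)).toReal - (L - b) / 2 : ℝ) : EReal) < g (c xbar) :=
          lt_of_lt_of_eq (EReal.coe_lt_coe_iff.2 (by linarith)) hgbar
        have ev2 : ∀ᶠ k in atTop,
            (((g (c xbar)).toReal - (L - b) / 2 : ℝ) : EReal) < g (A.z (K k)) :=
          hzK.eventually (hglsc (c xbar) _ hlt)
        filter_upwards [ev1, ev2] with k h1 h2
        have h3 : (g (c xbar)).toReal - (L - b) / 2 < G (K k) := by
          rw [← hG (K k), EReal.coe_lt_coe_iff] at h2; exact h2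
        have h4 : L = f xbar + (g (c xbar)).toReal := hLdef
        linarith
      · intro b hb
        have ev3 : ∀ᶠ k in atTop, t (K k) < b - L :=
          htK.eventually (gt_mem_nhds (by linarith))
        filter_upwards [ev3] with k h1
        have h2 := masterT xbar hfeasbar (K k)
        have h4 : L = f xbar + (g (c xbar)).toReal := hLdef
        linarith
    refine ⟨hfeasbar, ?_, hzK, ?_⟩
    · -- global minimizer
      intro x
      by_cases hx : c x ∈ edom g
      · have hgx : ((g (c x)).toReal : EReal) = g (c x) :=
          EReal.coe_toReal (LT.lt.ne hx) (hgb _)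
        have h1 : L ≤ f x + (g (c x)).toReal := by
          have h2 : Tendsto (fun k => (f x + (g (c x)).toReal) + t (K k)) atTop
              (𝓝 (f x + (g (c x)).toReal)) := by
            simpa using tendsto_const_nhds.add htK
          exact le_of_tendsto_of_tendsto' haK h2 fun k => masterT x hx (K k)
        rw [hLdef] at h1
        rw [← hgbar, ← hgx, ← EReal.coe_add, ← EReal.coe_add]
        exact EReal.coe_le_coe_iff.2 h1
      · have h1 : g (c x) = ⊤ := by
          simp only [edom, Set.mem_setOf_eq, not_lt] at hx
          exact top_le_iff.1 hx
        rw [h1, EReal.add_top_of_ne_bot (EReal.coe_ne_bot _)]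
        exact le_top
    · -- limit of the value
      have hfun : (fun k => (f (A.x (K k)) : EReal) + g (A.z (K k)))
          = fun k => (((f (A.x (K k)) + G (K k) : ℝ)) : EReal) := by
        funext k; rw [← hG (K k), ← EReal.coe_add]
      rw [hfun, ← hgbar, ← EReal.coe_add]
      rw [EReal.tendsto_coe, ← hLdef]
      exact haK

end Paper
end
end

section
/- Let {(x^k, z^k, y^k)} be a sequence generated by the safeguarded implicit augmented Lagrangian algorithm for problem (P) with ε_k → 0. Assume the approximate global optimality condition L_{μ_k}(x^k, ŷ^k) ≤ L_{μ_k}(x, ŷ^k) + ε_k for all x ∈ ℝ^n and all k, that dom g is closed, and that the safeguarding rule ŷ^{k+1} = 0 is used whenever y^k ∉ Y. Let x̄ be an accumulation point of {x^k}. Then x̄ is a global minimizer of x ↦ dist(c(x), dom g), and for every (x, z) ∈ ℝ^n × dom g with ‖c(x) − z‖ = dist(c(x̄), dom g) one has limsup_{k→∞} ( f(x^k) + g(z^k) ) ≤ f(x) + g(z). -/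
open Filter Topology Bornology

noncomputable section

namespace Paper

variable {n m : ℕ}

private lemma geom_to_zero {V : ℕ → ℝ} {θ : ℝ} (hθ0 : 0 ≤ θ) (hθ1 : θ < 1)
    (hVnn : ∀ k, 0 ≤ V k) {k0 : ℕ} (hdec : ∀ k, k0 ≤ k → V (k + 1) ≤ θ * V k) :
    Tendsto V atTop (𝓝 0) := by
  have key : ∀ j, V (k0 + j) ≤ θ ^ j * V k0 := by
    intro j
    induction j with
    | zero => simp
    | succ j ih =>
      have h1 : V (k0 + j + 1) ≤ θ * V (k0 + j) := hdec (k0 + j) (Nat.le_add_right _ _)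
      have h2 : θ * V (k0 + j) ≤ θ * (θ ^ j * V k0) := by
        exact mul_le_mul_of_nonneg_left ih hθ0
      calc V (k0 + (j + 1)) = V (k0 + j + 1) := by ring_nf
        _ ≤ θ * V (k0 + j) := h1
        _ ≤ θ * (θ ^ j * V k0) := h2
        _ = θ ^ (j + 1) * V k0 := by ring
  have h1 : Tendsto (fun j => V (j + k0)) atTop (𝓝 0) := by
    apply squeeze_zero (fun j => hVnn _) (fun j => by
      simpa [Nat.add_comm] using key j)
    simpa using (tendsto_pow_atTop_nhds_zero_of_lt_one hθ0 hθ1).mul_const (V k0)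
  exact (tendsto_add_atTop_iff_nat k0).1 h1

private lemma limsup_coe_le_of_le {s e : ℕ → ℝ} {t : ℝ}
    (h : ∀ᶠ k in atTop, s k ≤ t + e k) (he : Tendsto e atTop (𝓝 0)) :
    limsup (fun k => ((s k : ℝ) : EReal)) atTop ≤ (t : EReal) := by
  have h1 : limsup (fun k => ((s k : ℝ) : EReal)) atTop
      ≤ limsup (fun k => ((t + e k : ℝ) : EReal)) atTop :=
    limsup_le_limsup (h.mono fun k hk => EReal.coe_le_coe_iff.2 hk)
  have h2 : Tendsto (fun k => ((t + e k : ℝ) : EReal)) atTop (𝓝 ((t : ℝ) : EReal)) := by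
    refine EReal.tendsto_coe.2 ?_
    simpa using tendsto_const_nhds.add he
  exact h1.trans h2.limsup_eq.le

private lemma alg1 {μ q V M D C W Gk Δ b Yk : ℝ}
    (hμ : 0 ≤ μ) (hq : 0 ≤ q) (hC : 0 ≤ C) (hV : 0 ≤ V) (hD : 0 ≤ D)
    (hW : 0 ≤ W) (hWle : W ≤ M + V) (hYk : 0 ≤ Yk) (hYC : Yk ≤ C)
    (hkey : 2*μ*Gk + V^2 ≤ 2*μ*Δ + D^2 + 2*μ*((V+D)*Yk))
    (hGmul : 2*μ*b - q*W^2 ≤ 2*μ*Gk) :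
    (1 - 2*q - μ)*V^2 ≤ 2*μ*(Δ - b) + 2*q*M^2 + μ*C^2 + D^2 + 2*μ*C*D := by
  have h1 : W^2 ≤ (M+V)^2 := by nlinarith
  have h2 : 2*μ*((V+D)*Yk) ≤ 2*μ*((V+D)*C) := by
    have h3 : (V+D)*Yk ≤ (V+D)*C := mul_le_mul_of_nonneg_left hYC (by linarith)
    nlinarith
  nlinarith [mul_nonneg hq (sub_nonneg.2 h1), mul_nonneg hq (sq_nonneg (M - V)),
    mul_nonneg hμ (sq_nonneg (C - V))]

private lemma sq_le_imp_le {d D : ℝ} (hd : 0 ≤ d) (hD : 0 ≤ D) (h : d^2 ≤ D^2) : d ≤ D := by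
  nlinarith

set_option maxHeartbeats 2000000 in
theorem statement13 {n m : ℕ}
    (f : Euc n → ℝ) (c : Euc n → Euc m) (g : Euc m → EReal)
    (hf : ContDiff ℝ 2 f) (hc : ContDiff ℝ 2 c)
    (hgp : ProperFn g) (hglsc : LowerSemicontinuous g) (hgpb : ProxBounded g)
    (hphi : ∃ r : ℝ, (⨅ x : Euc n, ((f x : EReal) + g (c x))) = (r : EReal))
    (A : ALMSeq n m f c g)
    (hε0 : Tendsto A.ε atTop (𝓝 0))
    (hglobal : ∀ k, ∀ x : Euc n,
      ALfun f c g (A.μ k) (A.x k) (A.yhat k) ≤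
        ALfun f c g (A.μ k) x (A.yhat k) + (A.ε k : EReal))
    (hdomcl : IsClosed (edom g))
    (hsafe : ∀ k, A.y k ∉ A.Y → A.yhat (k + 1) = 0)
    (xbar : Euc n) (K : ℕ → ℕ) (hK : StrictMono K)
    (hacc : Tendsto (fun k => A.x (K k)) atTop (𝓝 xbar)) :
    (∀ x : Euc n, Metric.infDist (c xbar) (edom g) ≤ Metric.infDist (c x) (edom g)) ∧
      (∀ (x : Euc n) (z : Euc m), z ∈ edom g →
        ‖c x - z‖ = Metric.infDist (c xbar) (edom g) →
        limsup (fun k => (f (A.x k) : EReal) + g (A.z k)) atTop ≤ (f x : EReal) + g z) := by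
  classical
  obtain ⟨hgne_bot, z₀, hz₀⟩ := hgp
  have hedom_ne : (edom g).Nonempty := ⟨z₀, hz₀⟩
  have hμpos : ∀ k, 0 < A.μ k := fun k => (A.hμthr k).1
  obtain ⟨C, hC⟩ := A.hYbdd.exists_norm_le
  have hyC : ∀ k, ‖A.yhat k‖ ≤ C := fun k => hC _ (A.hyhatY k)
  have hCnn : 0 ≤ C := (norm_nonneg _).trans (hyC 0)
  set V : ℕ → ℝ := fun k => ‖c (A.x k) - A.z k‖ with hVdef
  have hVnn : ∀ k, 0 ≤ V k := fun k => norm_nonneg _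
  -- the certificates z k are feasible
  have hzedom : ∀ k, A.z k ∈ edom g := by
    intro k
    have h := A.hprox k z₀
    have h0 : (0 : EReal) ≤
        ((‖A.z k - (c (A.x k) + A.μ k • A.yhat k)‖ ^ 2 / (2 * A.μ k) : ℝ) : EReal) := by
      have h1 : (0:ℝ) ≤ ‖A.z k - (c (A.x k) + A.μ k • A.yhat k)‖ ^ 2 / (2 * A.μ k) := by
        have := hμpos k; positivity
      exact_mod_cast h1
    have h1 : g (A.z k) ≤ g z₀ +
        ((‖z₀ - (c (A.x k) + A.μ k • A.yhat k)‖ ^ 2 / (2 * A.μ k) : ℝ) : EReal) :=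
      le_trans (le_add_of_nonneg_right h0) h
    exact lt_of_le_of_lt h1 (EReal.add_lt_top hz₀.ne (EReal.coe_ne_top _))
  set G : ℕ → ℝ := fun k => (g (A.z k)).toReal with hGdef
  have hG : ∀ k, g (A.z k) = ((G k : ℝ) : EReal) := fun k =>
    (EReal.coe_toReal (hzedom k).ne (hgne_bot _)).symm
  -- master inequality from approximate global optimality
  have master : ∀ k (x' : Euc n) (zz : Euc m), zz ∈ edom g →
      f (A.x k) + G k + ‖A.z k - (c (A.x k) + A.μ k • A.yhat k)‖ ^ 2 / (2 * A.μ k) ≤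
      f x' + (g zz).toReal + ‖zz - (c x' + A.μ k • A.yhat k)‖ ^ 2 / (2 * A.μ k) + A.ε k := by
    intro k x' zz hzz
    have hzzR : g zz = (((g zz).toReal : ℝ) : EReal) :=
      (EReal.coe_toReal hzz.ne (hgne_bot _)).symm
    have hmor : moreau g (A.μ k) (c (A.x k) + A.μ k • A.yhat k) =
        g (A.z k) +
          ((‖A.z k - (c (A.x k) + A.μ k • A.yhat k)‖ ^ 2 / (2 * A.μ k) : ℝ) : EReal) :=
      le_antisymm (iInf_le _ _) (le_iInf (A.hprox k))
    have hmor2 : moreau g (A.μ k) (c x' + A.μ k • A.yhat k) ≤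
        g zz + ((‖zz - (c x' + A.μ k • A.yhat k)‖ ^ 2 / (2 * A.μ k) : ℝ) : EReal) :=
      iInf_le _ _
    have h := hglobal k x'
    rw [ALfun, ALfun, hmor] at h
    have h2 := le_trans h (add_le_add_left
      (EReal.sub_le_sub (add_le_add_right hmor2 _) le_rfl) _)
    rw [hG k, hzzR] at h2
    have h3 : f (A.x k) + (G k + ‖A.z k - (c (A.x k) + A.μ k • A.yhat k)‖ ^ 2 / (2 * A.μ k))
        - A.μ k / 2 * ‖A.yhat k‖ ^ 2 ≤
        f x' + ((g zz).toReal + ‖zz - (c x' + A.μ k • A.yhat k)‖ ^ 2 / (2 * A.μ k))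
        - A.μ k / 2 * ‖A.yhat k‖ ^ 2 + A.ε k := by exact_mod_cast h2
    linarith
  -- key inequality (master, expanded and multiplied by 2μ)
  have key : ∀ k (x' : Euc n) (zz : Euc m), zz ∈ edom g →
      2 * A.μ k * (f (A.x k) + G k) + (V k) ^ 2 ≤
      2 * A.μ k * (f x' + (g zz).toReal + A.ε k) + ‖c x' - zz‖ ^ 2 +
        2 * A.μ k * ((V k + ‖c x' - zz‖) * ‖A.yhat k‖) := by
    intro k x' zz hzz
    have hμ := hμpos k
    have h := master k x' zz hzz
    have e1 : ‖A.z k - (c (A.x k) + A.μ k • A.yhat k)‖ ^ 2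
        = (V k) ^ 2 - 2 * A.μ k * inner ℝ (A.z k - c (A.x k)) (A.yhat k)
          + (A.μ k) ^ 2 * ‖A.yhat k‖ ^ 2 := by
      have h0 : A.z k - (c (A.x k) + A.μ k • A.yhat k)
          = (A.z k - c (A.x k)) - A.μ k • A.yhat k := by abel
      have hVk : ‖A.z k - c (A.x k)‖ = V k := norm_sub_rev _ _
      rw [h0, norm_sub_sq_real, real_inner_smul_right, norm_smul, hVk,
        Real.norm_eq_abs, abs_of_pos hμ]
      ring
    have e2 : ‖zz - (c x' + A.μ k • A.yhat k)‖ ^ 2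
        = ‖c x' - zz‖ ^ 2 - 2 * A.μ k * inner ℝ (zz - c x') (A.yhat k)
          + (A.μ k) ^ 2 * ‖A.yhat k‖ ^ 2 := by
      have h0 : zz - (c x' + A.μ k • A.yhat k) = (zz - c x') - A.μ k • A.yhat k := by abel
      have hD : ‖zz - c x'‖ = ‖c x' - zz‖ := norm_sub_rev _ _
      rw [h0, norm_sub_sq_real, real_inner_smul_right, norm_smul, hD,
        Real.norm_eq_abs, abs_of_pos hμ]
      ring
    rw [e1, e2] at h
    have hI : (inner ℝ (A.z k - c (A.x k)) (A.yhat k) : ℝ)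
        - inner ℝ (zz - c x') (A.yhat k) ≤ (V k + ‖c x' - zz‖) * ‖A.yhat k‖ := by
      have h1 := real_inner_le_norm (A.z k - c (A.x k) - (zz - c x')) (A.yhat k)
      rw [inner_sub_left] at h1
      have h2 : ‖A.z k - c (A.x k) - (zz - c x')‖ ≤ V k + ‖c x' - zz‖ := by
        calc ‖A.z k - c (A.x k) - (zz - c x')‖
            ≤ ‖A.z k - c (A.x k)‖ + ‖zz - c x'‖ := norm_sub_le _ _
          _ = V k + ‖c x' - zz‖ := by rw [norm_sub_rev, norm_sub_rev zz]
      have h3 := mul_le_mul_of_nonneg_right h2 (norm_nonneg (A.yhat k))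
      linarith
    have h2μ : (0:ℝ) < 2 * A.μ k := by linarith
    have h' := mul_le_mul_of_nonneg_left h h2μ.le
    have q1 : 2 * A.μ k * (f (A.x k) + G k +
        ((V k) ^ 2 - 2 * A.μ k * inner ℝ (A.z k - c (A.x k)) (A.yhat k)
          + (A.μ k) ^ 2 * ‖A.yhat k‖ ^ 2) / (2 * A.μ k))
        = 2 * A.μ k * (f (A.x k) + G k) + (V k) ^ 2
          - 2 * A.μ k * inner ℝ (A.z k - c (A.x k)) (A.yhat k)
          + (A.μ k) ^ 2 * ‖A.yhat k‖ ^ 2 := by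
      field_simp
      ring
    have q2 : 2 * A.μ k * (f x' + (g zz).toReal +
        (‖c x' - zz‖ ^ 2 - 2 * A.μ k * inner ℝ (zz - c x') (A.yhat k)
          + (A.μ k) ^ 2 * ‖A.yhat k‖ ^ 2) / (2 * A.μ k) + A.ε k)
        = 2 * A.μ k * (f x' + (g zz).toReal + A.ε k) + ‖c x' - zz‖ ^ 2
          - 2 * A.μ k * inner ℝ (zz - c x') (A.yhat k)
          + (A.μ k) ^ 2 * ‖A.yhat k‖ ^ 2 := by
      field_simp
      ring
    rw [q1, q2] at h'
    have hI2 := mul_le_mul_of_nonneg_left hI h2μ.le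
    nlinarith [h', hI2]
  -- prox-boundedness: a real lower bound for G
  obtain ⟨μ'', hμ''pos, b, hb⟩ := hgpb
  have hbG : ∀ k, b - ‖A.z k‖ ^ 2 / (2 * μ'') ≤ G k := by
    intro k
    have h := hb (A.z k)
    rw [hG k] at h
    have h2 : ((b : ℝ) : EReal) ≤ ((G k + ‖A.z k‖ ^ 2 / (2 * μ'') : ℝ) : EReal) := by
      push_cast
      exact h
    have h3 : b ≤ G k + ‖A.z k‖ ^ 2 / (2 * μ'') := by exact_mod_cast h2
    linarith
  have hGmul : ∀ k, 2 * A.μ k * b - (A.μ k / μ'') * ‖A.z k‖ ^ 2 ≤ 2 * A.μ k * G k := by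
    intro k
    have h := mul_le_mul_of_nonneg_left (hbG k) (by linarith [hμpos k] : (0:ℝ) ≤ 2 * A.μ k)
    have q : 2 * A.μ k * (b - ‖A.z k‖ ^ 2 / (2 * μ'')) =
        2 * A.μ k * b - (A.μ k / μ'') * ‖A.z k‖ ^ 2 := by
      field_simp
    linarith [q ▸ h]
  -- penalty parameter monotonicity and dichotomy
  have hμmono : ∀ k, A.μ (k + 1) ≤ A.μ k := by
    intro k
    rw [A.hμupd k]
    split
    · exact le_rfl
    · exact mul_le_of_le_one_left (hμpos k).le A.hκ.2.le
  have hμanti : Antitone A.μ := antitone_nat_of_succ_le hμmono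
  have hdich : Tendsto V atTop (𝓝 0) ∨ Tendsto A.μ atTop (𝓝 0) := by
    by_cases hS : {k | A.μ (k + 1) ≠ A.μ k}.Finite
    · left
      obtain ⟨k0, hk0⟩ : ∃ k0, ∀ k, k0 ≤ k → A.μ (k + 1) = A.μ k := by
        rcases hS.bddAbove with ⟨N, hN⟩
        refine ⟨N + 1, fun k hk => by_contra fun h => ?_⟩
        have := hN (Set.mem_setOf.2 h)
        omega
      have hdec : ∀ k, k0 ≤ k → V (k + 1) ≤ A.θ * V k := by
        intro k hk
        have h := A.hμupd (k + 1)
        rw [hk0 (k + 1) (by omega)] at h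
        by_cases hcond : (k + 1 = 0 ∨ V (k + 1) ≤ A.θ * V ((k + 1) - 1))
        · rcases hcond with h0 | hle
          · omega
          · simpa using hle
        · rw [if_neg hcond] at h
          have := hμpos (k + 1)
          have hκ1 := A.hκ.2
          nlinarith [h]
      exact geom_to_zero A.hθ.1.le A.hθ.2 hVnn hdec
    · right
      have hSinf : {k | A.μ (k + 1) ≠ A.μ k}.Infinite := hS
      have hstep : ∀ j, ∃ N, ∀ k, N ≤ k → A.μ k ≤ A.κ ^ j * A.μ 0 := by
        intro j
        induction j with
        | zero => exact ⟨0, fun k _ => by simpa using hμanti (Nat.zero_le k)⟩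
        | succ j ih =>
          obtain ⟨N, hN⟩ := ih
          obtain ⟨k', hk'S, hk'N⟩ := hSinf.exists_gt N
          have h1 : A.μ (k' + 1) = A.κ * A.μ k' := by
            have h := A.hμupd k'
            by_cases hcond : (k' = 0 ∨ V k' ≤ A.θ * V (k' - 1))
            · rw [if_pos hcond] at h
              exact absurd h hk'S
            · rwa [if_neg hcond] at h
          refine ⟨k' + 1, fun k hk => ?_⟩
          calc A.μ k ≤ A.μ (k' + 1) := hμanti hk
            _ = A.κ * A.μ k' := h1
            _ ≤ A.κ * (A.κ ^ j * A.μ 0) :=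
                mul_le_mul_of_nonneg_left (hN k' hk'N.le) A.hκ.1.le
            _ = A.κ ^ (j + 1) * A.μ 0 := by ring
      rw [tendsto_order]
      constructor
      · intro a ha
        filter_upwards with k
        exact lt_trans ha (hμpos k)
      · intro a ha
        obtain ⟨j, hj⟩ : ∃ j, A.κ ^ j * A.μ 0 < a := by
          have h := (tendsto_pow_atTop_nhds_zero_of_lt_one A.hκ.1.le A.hκ.2).mul_const (A.μ 0)
          rw [zero_mul] at h
          exact (h.eventually (gt_mem_nhds ha)).exists
        obtain ⟨N, hN⟩ := hstep j
        filter_upwards [eventually_ge_atTop N] with k hk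
        exact (hN k hk).trans_lt hj
  -- Claim 1
  set d := Metric.infDist (c xbar) (edom g) with hd_def
  have hcK : Tendsto (fun j => c (A.x (K j))) atTop (𝓝 (c xbar)) :=
    (hc.continuous.tendsto xbar).comp hacc
  have hfK : Tendsto (fun j => f (A.x (K j))) atTop (𝓝 (f xbar)) :=
    (hf.continuous.tendsto xbar).comp hacc
  have hεK : Tendsto (fun j => A.ε (K j)) atTop (𝓝 0) := hε0.comp hK.tendsto_atTop
  have claim1 : ∀ x : Euc n, d ≤ Metric.infDist (c x) (edom g) := by
    rcases hdich with hVt | hμt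
    · -- V → 0 : the accumulation point is feasible
      have hcz : Tendsto (fun j => A.z (K j)) atTop (𝓝 (c xbar)) := by
        have h2 : Tendsto (fun j => c (A.x (K j)) - A.z (K j)) atTop (𝓝 0) := by
          rw [tendsto_zero_iff_norm_tendsto_zero]
          exact hVt.comp hK.tendsto_atTop
        have h3 := hcK.sub h2
        simpa using h3
      have hmem : c xbar ∈ edom g :=
        hdomcl.mem_of_tendsto hcz (Eventually.of_forall fun j => hzedom _)
      intro x
      rw [hd_def, Metric.infDist_zero_of_mem hmem]
      exact Metric.infDist_nonneg
    · intro x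
      by_cases hd0 : d ≤ 0
      · exact hd0.trans Metric.infDist_nonneg
      push_neg at hd0
      refine le_of_not_gt fun hlt => ?_
      obtain ⟨zz, hzz, hzzlt⟩ := (Metric.infDist_lt_iff hedom_ne).1 hlt
      have hdd : d ≤ ‖c x - zz‖ := by
        have hμK : Tendsto (fun j => A.μ (K j)) atTop (𝓝 0) := hμt.comp hK.tendsto_atTop
        have hδt : Tendsto (fun j => ‖c xbar - c (A.x (K j))‖) atTop (𝓝 0) := by
          have h := (tendsto_const_nhds (x := c xbar)).sub hcK
          rw [sub_self] at h
          exact tendsto_zero_iff_norm_tendsto_zero.1 h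
        have hMt : Tendsto (fun j => ‖c (A.x (K j))‖) atTop (𝓝 ‖c xbar‖) := hcK.norm
        set D := ‖c x - zz‖ with hD_def
        have hDnn : 0 ≤ D := norm_nonneg _
        -- the two sequences
        set Ls : ℕ → ℝ := fun j => (1 - 2 * (A.μ (K j) / μ'') - A.μ (K j)) *
          (d - ‖c xbar - c (A.x (K j))‖) ^ 2 with hLs_def
        set Rs : ℕ → ℝ := fun j =>
          2 * A.μ (K j) * (f x + (g zz).toReal + A.ε (K j) - f (A.x (K j)) - b) +
            2 * (A.μ (K j) / μ'') * ‖c (A.x (K j))‖ ^ 2 + A.μ (K j) * C ^ 2 + D ^ 2 +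
            2 * A.μ (K j) * C * D with hRs_def
        have hcoeff : Tendsto (fun j => 1 - 2 * (A.μ (K j) / μ'') - A.μ (K j))
            atTop (𝓝 1) := by
          have h := (tendsto_const_nhds (x := (1:ℝ))).sub
            ((hμK.div_const μ'').const_mul 2) |>.sub hμK
          simpa using h
        have hLlim : Tendsto Ls atTop (𝓝 (d ^ 2)) := by
          have h := hcoeff.mul (((tendsto_const_nhds (x := d)).sub hδt).pow 2)
          simpa using h
        have hRlim : Tendsto Rs atTop (𝓝 (D ^ 2)) := by
          have t1 : Tendsto (fun j => 2 * A.μ (K j) *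
              (f x + (g zz).toReal + A.ε (K j) - f (A.x (K j)) - b)) atTop (𝓝 0) := by
            have hin : Tendsto (fun j => f x + (g zz).toReal + A.ε (K j) - f (A.x (K j)) - b)
                atTop (𝓝 (f x + (g zz).toReal + 0 - f xbar - b)) :=
              (((tendsto_const_nhds (x := f x + (g zz).toReal)).add hεK).sub hfK).sub
                tendsto_const_nhds
            have h := (hμK.const_mul 2).mul hin
            simpa using h
          have t2 : Tendsto (fun j => 2 * (A.μ (K j) / μ'') * ‖c (A.x (K j))‖ ^ 2)
              atTop (𝓝 0) := by
            have h := ((hμK.div_const μ'').const_mul 2).mul (hMt.pow 2)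
            simpa using h
          have t3 : Tendsto (fun j => A.μ (K j) * C ^ 2) atTop (𝓝 0) := by
            have h := hμK.mul_const (C ^ 2)
            simpa using h
          have t5 : Tendsto (fun j => 2 * A.μ (K j) * C * D) atTop (𝓝 0) := by
            have h := ((hμK.const_mul 2).mul_const C).mul_const D
            simpa using h
          have h := (((t1.add t2).add t3).add (tendsto_const_nhds (x := D ^ 2))).add t5
          simpa using h
        have hev : ∀ᶠ j in atTop, Ls j ≤ Rs j := by
          have he1 : ∀ᶠ j in atTop, (0:ℝ) < 1 - 2 * (A.μ (K j) / μ'') - A.μ (K j) :=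
            hcoeff.eventually (lt_mem_nhds (by norm_num : (0:ℝ) < 1))
          have he2 : ∀ᶠ j in atTop, ‖c xbar - c (A.x (K j))‖ < d :=
            hδt.eventually (gt_mem_nhds hd0)
          filter_upwards [he1, he2] with j h1 h2
          have hdVj : d - ‖c xbar - c (A.x (K j))‖ ≤ V (K j) := by
            have ha : d ≤ dist (c xbar) (A.z (K j)) :=
              Metric.infDist_le_dist_of_mem (hzedom _)
            rw [dist_eq_norm] at ha
            have hb2 : ‖c xbar - A.z (K j)‖ ≤
                ‖c xbar - c (A.x (K j))‖ + ‖c (A.x (K j)) - A.z (K j)‖ := by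
              have := norm_add_le (c xbar - c (A.x (K j))) (c (A.x (K j)) - A.z (K j))
              simpa [sub_add_sub_cancel] using this
            have : V (K j) = ‖c (A.x (K j)) - A.z (K j)‖ := rfl
            linarith
          have hsq : (d - ‖c xbar - c (A.x (K j))‖) ^ 2 ≤ (V (K j)) ^ 2 :=
            pow_le_pow_left₀ (by linarith) hdVj 2
          have hstep1 : Ls j ≤ (1 - 2 * (A.μ (K j) / μ'') - A.μ (K j)) * (V (K j)) ^ 2 :=
            mul_le_mul_of_nonneg_left hsq h1.le
          refine hstep1.trans ?_
          -- apply alg1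
          have hkeyj := key (K j) x zz hzz
          have hkey' : 2 * A.μ (K j) * G (K j) + (V (K j)) ^ 2 ≤
              2 * A.μ (K j) * (f x + (g zz).toReal + A.ε (K j) - f (A.x (K j))) + D ^ 2 +
                2 * A.μ (K j) * ((V (K j) + D) * ‖A.yhat (K j)‖) := by
            rw [hD_def]
            linarith [hkeyj]
          have hWle : ‖A.z (K j)‖ ≤ ‖c (A.x (K j))‖ + V (K j) := by
            have h := norm_sub_le (c (A.x (K j))) (c (A.x (K j)) - A.z (K j))
            simpa using h
          have := alg1 (hμpos (K j)).le
            (div_nonneg (hμpos _).le hμ''pos.le) hCnn (hVnn (K j)) hDnn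
            (norm_nonneg _) hWle (norm_nonneg _) (hyC (K j)) hkey' (hGmul (K j))
          linarith [this]
        have hd2 : d ^ 2 ≤ D ^ 2 := le_of_tendsto_of_tendsto hLlim hRlim hev
        exact sq_le_imp_le hd0.le hDnn hd2
      rw [dist_eq_norm] at hzzlt
      exact absurd hzzlt (not_lt.2 hdd)
  -- d ≤ V k for every k
  have hd_le_V : ∀ k, d ≤ V k := by
    intro k
    calc d ≤ Metric.infDist (c (A.x k)) (edom g) := claim1 (A.x k)
      _ ≤ dist (c (A.x k)) (A.z k) := Metric.infDist_le_dist_of_mem (hzedom k)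
      _ = V k := dist_eq_norm _ _
  have hdnn : 0 ≤ d := Metric.infDist_nonneg
  refine ⟨claim1, ?_⟩
  -- Claim 2
  intro x zz hzz hDd
  have hzzR : g zz = (((g zz).toReal : ℝ) : EReal) :=
    (EReal.coe_toReal hzz.ne (hgne_bot _)).symm
  have hL : (fun k => (f (A.x k) : EReal) + g (A.z k)) =
      fun k => ((f (A.x k) + G k : ℝ) : EReal) := by
    funext k
    rw [hG k, ← EReal.coe_add]
  have hR : (f x : EReal) + g zz = ((f x + (g zz).toReal : ℝ) : EReal) := by
    rw [EReal.coe_add]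
    exact congrArg (fun t => (f x : EReal) + t) hzzR
  rw [hL, hR]
  rcases hdich with hVt | hμt
  · -- V → 0 : then d = 0
    have hd0 : d = 0 :=
      le_antisymm (ge_of_tendsto hVt (Eventually.of_forall hd_le_V)) hdnn
    refine limsup_coe_le_of_le (e := fun k => A.ε k + C * V k)
      (Eventually.of_forall fun k => ?_) (by simpa using hε0.add (hVt.const_mul C))
    have hkeyk := key k x zz hzz
    rw [hDd, hd0] at hkeyk
    have hμ := hμpos k
    have hy := hyC k
    have hVk := hVnn k
    have hynn := norm_nonneg (A.yhat k)
    have h3 : 2 * A.μ k * ((V k + 0) * ‖A.yhat k‖) ≤ 2 * A.μ k * ((V k + 0) * C) := by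
      have h4 : (V k + 0) * ‖A.yhat k‖ ≤ (V k + 0) * C :=
        mul_le_mul_of_nonneg_left hy (by linarith)
      nlinarith
    have h2 : 2 * A.μ k * (f (A.x k) + G k) ≤
        2 * A.μ k * (f x + (g zz).toReal + (A.ε k + C * V k)) := by
      nlinarith [hkeyk, h3, sq_nonneg (V k)]
    exact (mul_le_mul_iff_right₀ (by linarith : (0:ℝ) < 2 * A.μ k)).1 h2
  · -- μ → 0
    by_cases hd0 : d = 0
    · refine limsup_coe_le_of_le (e := fun k => A.ε k + A.μ k * (C ^ 2 / 2))
        (Eventually.of_forall fun k => ?_)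
        (by simpa using hε0.add (hμt.mul_const (C ^ 2 / 2)))
      have hkeyk := key k x zz hzz
      rw [hDd, hd0] at hkeyk
      have hμ := hμpos k
      have hy := hyC k
      have hVk := hVnn k
      have hynn := norm_nonneg (A.yhat k)
      have h3 : 2 * A.μ k * ((V k + 0) * ‖A.yhat k‖) ≤ 2 * A.μ k * ((V k + 0) * C) := by
        have h4 : (V k + 0) * ‖A.yhat k‖ ≤ (V k + 0) * C :=
          mul_le_mul_of_nonneg_left hy (by linarith)
        nlinarith
      have h2 : 2 * A.μ k * (f (A.x k) + G k) ≤
          2 * A.μ k * (f x + (g zz).toReal + (A.ε k + A.μ k * (C ^ 2 / 2))) := by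
        nlinarith [hkeyk, h3, sq_nonneg (V k - A.μ k * C)]
      exact (mul_le_mul_iff_right₀ (by linarith : (0:ℝ) < 2 * A.μ k)).1 h2
    · -- d > 0 : safeguarding forces yhat = 0 eventually
      have hdpos : 0 < d := lt_of_le_of_ne hdnn (Ne.symm hd0)
      have hyhat0 : ∀ᶠ k in atTop, A.yhat k = 0 := by
        have hsmall : ∀ᶠ k in atTop, A.μ k * (2 * C + 1) < d := by
          have h := hμt.mul_const (2 * C + 1)
          rw [zero_mul] at h
          exact h.eventually (gt_mem_nhds hdpos)
        rw [eventually_atTop] at hsmall ⊢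
        obtain ⟨N, hN⟩ := hsmall
        refine ⟨N + 1, fun k hk => ?_⟩
        obtain ⟨k', rfl⟩ : ∃ k', k = k' + 1 := ⟨k - 1, by omega⟩
        have hk'N : N ≤ k' := by omega
        apply hsafe
        intro hyY
        have hynorm := hC _ hyY
        rw [A.hy k'] at hynorm
        have hμ := hμpos k'
        have h1 : ‖(A.μ k')⁻¹ • (c (A.x k') - A.z k')‖ = (A.μ k')⁻¹ * V k' := by
          rw [norm_smul, Real.norm_eq_abs, abs_of_pos (inv_pos.2 hμ)]
        have h2 : ‖(A.μ k')⁻¹ • (c (A.x k') - A.z k')‖ ≤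
            ‖A.yhat k' + (A.μ k')⁻¹ • (c (A.x k') - A.z k')‖ + ‖A.yhat k'‖ := by
          have := norm_sub_le (A.yhat k' + (A.μ k')⁻¹ • (c (A.x k') - A.z k')) (A.yhat k')
          simpa using this
        have h3 : (A.μ k')⁻¹ * d ≤ (A.μ k')⁻¹ * V k' :=
          mul_le_mul_of_nonneg_left (hd_le_V k') (inv_nonneg.2 hμ.le)
        have h4 : 2 * C + 1 < (A.μ k')⁻¹ * d := by
          rw [inv_mul_eq_div, lt_div_iff₀ hμ]
          have := hN k' hk'N
          nlinarith
        have h5 := hyC k'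
        linarith [h1 ▸ h2]
      rw [eventually_atTop] at hyhat0
      obtain ⟨N, hN⟩ := hyhat0
      refine limsup_coe_le_of_le (e := A.ε)
        ?_ hε0
      rw [eventually_atTop]
      refine ⟨N, fun k hk => ?_⟩
      have hkeyk := key k x zz hzz
      rw [hDd, hN k hk] at hkeyk
      simp only [norm_zero, mul_zero] at hkeyk
      have hμ := hμpos k
      have hVd := hd_le_V k
      have hsq : d ^ 2 ≤ V k ^ 2 := pow_le_pow_left₀ hdnn hVd 2
      have h2 : 2 * A.μ k * (f (A.x k) + G k) ≤
          2 * A.μ k * (f x + (g zz).toReal + A.ε k) := by linarith [hkeyk]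
      exact (mul_le_mul_iff_right₀ (by linarith : (0:ℝ) < 2 * A.μ k)).1 h2

end Paper
end
end

section
/- Let x̄ ∈ ℝ^n be a strict local minimizer of problem (P), i.e., x̄ is feasible and there is a ball around x̄ on which φ(x) > φ(x̄) for every feasible x ≠ x̄. Then there exists r > 0 such that: whenever {x^k} is a sequence with ‖x^k − x̄‖ ≤ r for all k and {z^k} ⊆ dom g is a sequence with ‖c(x^k) − z^k‖ → 0 and limsup_{k→∞} ( f(x^k) + g(z^k) ) ≤ φ(x̄), then x^k → x̄ and z^k → c(x̄). -/
open Filter Topology Bornology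

noncomputable section

namespace Paper

variable {n m : ℕ}

/-- Auxiliary: eventual strict lower bound for a sum of a convergent real sequence
and an `EReal` sequence lower-semicontinuously bounded below by `A`. -/
lemma ev_lt_aux (f' : ℕ → ℝ) (G' : ℕ → EReal) (a : ℝ) (A : EReal)
    (hf : Tendsto f' atTop (𝓝 a))
    (hG : ∀ y : EReal, y < A → ∀ᶠ k in atTop, y < G' k)
    (hGne : ∀ k, G' k ≠ ⊥)
    (t : EReal) (ht : t < (a : EReal) + A) :
    ∀ᶠ k in atTop, t < (f' k : EReal) + G' k := by
  induction t with
  | bot =>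
      filter_upwards with k
      refine Ne.bot_lt ?_
      intro h
      rcases EReal.add_eq_bot_iff.1 h with h' | h'
      · exact (EReal.coe_ne_bot _) h'
      · exact hGne k h'
  | top => exact absurd ht (not_top_lt)
  | coe r =>
      induction A with
      | bot => simp at ht
      | top =>
          have h1 : ∀ᶠ k in atTop, (a - 1 : ℝ) < f' k :=
            hf.eventually_const_lt (by linarith)
          have h2 : ∀ᶠ k in atTop, ((r - a + 1 : ℝ) : EReal) < G' k :=
            hG _ (EReal.coe_lt_top _)
          filter_upwards [h1, h2] with k hk1 hk2
          have : ((r : ℝ) : EReal) = ((a - 1 : ℝ) : EReal) + ((r - a + 1 : ℝ) : EReal) := by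
            rw [← EReal.coe_add]; norm_num
          rw [this]
          exact EReal.add_lt_add (EReal.coe_lt_coe_iff.2 hk1) hk2
      | coe A' =>
          have hrA : r < a + A' := by exact_mod_cast ht
          set δ : ℝ := (a + A' - r) / 2 with hδ
          have hδpos : 0 < δ := by simp only [hδ]; linarith
          have h1 : ∀ᶠ k in atTop, (a - δ : ℝ) < f' k :=
            hf.eventually_const_lt (by linarith)
          have h2 : ∀ᶠ k in atTop, ((A' - δ : ℝ) : EReal) < G' k :=
            hG _ (EReal.coe_lt_coe_iff.2 (by linarith))
          filter_upwards [h1, h2] with k hk1 hk2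
          have heq : ((r : ℝ) : EReal) = ((a - δ : ℝ) : EReal) + ((A' - δ : ℝ) : EReal) := by
            rw [← EReal.coe_add]
            norm_num
            congr 1
            simp only [hδ]; ring
          rw [heq]
          exact EReal.add_lt_add (EReal.coe_lt_coe_iff.2 hk1) hk2

theorem statement14 {n m : ℕ}
    (f : Euc n → ℝ) (c : Euc n → Euc m) (g : Euc m → EReal)
    (hf : ContDiff ℝ 2 f) (hc : ContDiff ℝ 2 c)
    (hgp : ProperFn g) (hglsc : LowerSemicontinuous g) (hgpb : ProxBounded g)
    (hphi : ∃ r : ℝ, (⨅ x : Euc n, ((f x : EReal) + g (c x))) = (r : EReal))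
    (xbar : Euc n) (hmin : StrictLocalMin f c g xbar) :
    ∃ r : ℝ, 0 < r ∧ ∀ (xs : ℕ → Euc n) (zs : ℕ → Euc m),
      (∀ k, ‖xs k - xbar‖ ≤ r) → (∀ k, zs k ∈ edom g) →
      Tendsto (fun k => ‖c (xs k) - zs k‖) atTop (𝓝 0) →
      limsup (fun k => (f (xs k) : EReal) + g (zs k)) atTop ≤ (f xbar : EReal) + g (c xbar) →
      Tendsto xs atTop (𝓝 xbar) ∧ Tendsto zs atTop (𝓝 (c xbar)) := by
  obtain ⟨hfeas, ρ, hρ, hstrict⟩ := hmin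
  refine ⟨ρ, hρ, ?_⟩
  intro xs zs hxball hzdom hcz hls
  have hfc : Continuous f := hf.continuous
  have hcc : Continuous c := hc.continuous
  have hdiff0 : Tendsto (fun k => c (xs k) - zs k) atTop (𝓝 0) :=
    tendsto_zero_iff_norm_tendsto_zero.2 hcz
  -- Main claim: every subsequence has a sub-subsequence converging to `xbar`.
  have key : ∀ ns : ℕ → ℕ, Tendsto ns atTop atTop →
      ∃ ms : ℕ → ℕ, Tendsto (fun i => xs (ns (ms i))) atTop (𝓝 xbar) := by
    intro ns hns
    have hcpt : IsCompact (Metric.closedBall xbar ρ) := isCompact_closedBall _ _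
    have hmem : ∀ k, xs (ns k) ∈ Metric.closedBall xbar ρ := by
      intro k
      simpa [Metric.mem_closedBall, dist_eq_norm] using hxball (ns k)
    obtain ⟨x0, hx0mem, ms, hms, hlim⟩ := hcpt.tendsto_subseq hmem
    set φ' : ℕ → ℕ := fun i => ns (ms i) with hφ'
    have hφ'tendsto : Tendsto φ' atTop atTop := hns.comp hms.tendsto_atTop
    have hxslim : Tendsto (fun i => xs (φ' i)) atTop (𝓝 x0) := hlim
    have hclim : Tendsto (fun i => c (xs (φ' i))) atTop (𝓝 (c x0)) :=
      (hcc.tendsto x0).comp hxslim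
    have hdiff' : Tendsto (fun i => c (xs (φ' i)) - zs (φ' i)) atTop (𝓝 0) :=
      hdiff0.comp hφ'tendsto
    have hzlim : Tendsto (fun i => zs (φ' i)) atTop (𝓝 (c x0)) := by
      have := hclim.sub hdiff'
      simpa using this
    have hflim : Tendsto (fun i => f (xs (φ' i))) atTop (𝓝 (f x0)) :=
      (hfc.tendsto x0).comp hxslim
    -- lower semicontinuity along the subsequence
    have hG : ∀ y : EReal, y < g (c x0) → ∀ᶠ i in atTop, y < g (zs (φ' i)) := by
      intro y hy
      exact hzlim.eventually (hglsc (c x0) y hy)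
    -- the key inequality
    have hineq : (f x0 : EReal) + g (c x0) ≤ (f xbar : EReal) + g (c xbar) := by
      by_contra hcon
      push_neg at hcon
      obtain ⟨t, ht1, ht2⟩ := exists_between hcon
      have hev : ∀ᶠ i in atTop, t < (f (xs (φ' i)) : EReal) + g (zs (φ' i)) :=
        ev_lt_aux _ _ _ _ hflim hG (fun i => (hgp.1 _)) t ht2
      have hfreq : ∃ᶠ j in atTop, t ≤ (f (xs j) : EReal) + g (zs j) := by
        have : ∀ᶠ j in map φ' atTop, t ≤ (f (xs j) : EReal) + g (zs j) := by
          rw [eventually_map]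
          exact hev.mono fun i hi => hi.le
        exact this.frequently.filter_mono hφ'tendsto
      have := le_limsup_of_frequently_le' hfreq
      exact absurd (this.trans hls) (not_le.2 ht1)
    -- feasibility of x0
    have hRHS : (f xbar : EReal) + g (c xbar) < ⊤ :=
      EReal.add_lt_top (EReal.coe_ne_top _) hfeas.ne
    have hx0feas : c x0 ∈ edom g := by
      have : (f x0 : EReal) + g (c x0) < ⊤ := lt_of_le_of_lt hineq hRHS
      by_contra hnot
      have hgtop : g (c x0) = ⊤ := by
        simpa [edom, lt_top_iff_ne_top, not_not] using hnot
      rw [hgtop] at this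
      simp [EReal.add_top_of_ne_bot (EReal.coe_ne_bot _)] at this
    -- x0 = xbar
    have hx0eq : x0 = xbar := by
      by_contra hne
      have hball : ‖x0 - xbar‖ ≤ ρ := by
        simpa [Metric.mem_closedBall, dist_eq_norm] using hx0mem
      exact absurd hineq (not_le.2 (hstrict x0 hball hx0feas hne))
    exact ⟨ms, hx0eq ▸ hlim⟩
  have hxs : Tendsto xs atTop (𝓝 xbar) := tendsto_of_subseq_tendsto key
  refine ⟨hxs, ?_⟩
  have hclim : Tendsto (fun k => c (xs k)) atTop (𝓝 (c xbar)) := (hcc.tendsto xbar).comp hxs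
  have := hclim.sub hdiff0
  simpa using this

end Paper
end
end

section
/- Let x̄ ∈ ℝ^n be a strict local minimizer of problem (P) and let Y ⊆ ℝ^m be bounded. Then there exists a radius r > 0 with the following property: whenever {ŷ^k} ⊆ Y, {μ_k} ⊂ (0, μ_g) with μ_k ↓ 0, {ε_k} ⊂ [0, ∞) with ε_k → 0, and for each k the point x^k lies in the closed ball B_r(x̄) and satisfies L_{μ_k}(x^k, ŷ^k) ≤ L_{μ_k}(x, ŷ^k) + ε_k for all x ∈ B_r(x̄), then x^k → x̄. -/
open Filter Topology Bornology

noncomputable section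

namespace Paper

variable {n m : ℕ}

lemma real_arith (a b μ0 μ s Zs A B Z gz : ℝ)
    (hμ0 : 0 < μ0) (hs : 0 < s) (hμ : 0 < μ) (hμle : μ ≤ μ0 / 2)
    (hμsmall : a - b + (Zs + s) ^ 2 / μ0 + (s / 2) ^ 2 / μ0 ≤ (s / 2) ^ 2 / (2 * μ))
    (hA : s / 2 ≤ A) (hB : B ≤ Zs + s) (hZ : Z ≤ A + B)
    (hbz : b ≤ gz + Z ^ 2 / (2 * μ0)) (hB0 : 0 ≤ B) (hZ0 : 0 ≤ Z) :
    a ≤ gz + A ^ 2 / (2 * μ) := by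
  have hA0 : 0 ≤ A := le_trans (by linarith) hA
  have huv : 1 / μ0 ≤ 1 / (2 * μ) :=
    one_div_le_one_div_of_le (by positivity) (by linarith)
  have hZ2 : Z ^ 2 ≤ 2 * A ^ 2 + 2 * B ^ 2 := by nlinarith [sq_nonneg (A - B)]
  have t1 : Z ^ 2 / (2 * μ0) ≤ (2 * A ^ 2 + 2 * B ^ 2) / (2 * μ0) := by gcongr
  have t2 : (s / 2) ^ 2 * (1 / (2 * μ) - 1 / μ0) ≤ A ^ 2 * (1 / (2 * μ) - 1 / μ0) := by
    apply mul_le_mul_of_nonneg_right (by nlinarith) (by linarith)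
  have t3 : B ^ 2 / μ0 ≤ (Zs + s) ^ 2 / μ0 := by gcongr
  have e1 : (2 * A ^ 2 + 2 * B ^ 2) / (2 * μ0) = A ^ 2 * (1 / μ0) + B ^ 2 / μ0 := by ring
  have e2 : A ^ 2 / (2 * μ) = A ^ 2 * (1 / (2 * μ)) := by ring
  have e3 : (s / 2) ^ 2 / (2 * μ) = (s / 2) ^ 2 * (1 / (2 * μ)) := by ring
  have e4 : (s / 2) ^ 2 / μ0 = (s / 2) ^ 2 * (1 / μ0) := by ring
  nlinarith [t1, t2, t3, hbz, hμsmall, e1, e2, e3, e4]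

lemma AL_le_phi (f : Euc n → ℝ) (c : Euc n → Euc m) (g : Euc m → EReal)
    {μ : ℝ} (hμ : 0 < μ) (x : Euc n) (y : Euc m) :
    ALfun f c g μ x y ≤ (f x : EReal) + g (c x) := by
  have hnorm : ‖c x - (c x + μ • y)‖ ^ 2 / (2 * μ) = μ / 2 * ‖y‖ ^ 2 := by
    have h1 : c x - (c x + μ • y) = -(μ • y) := by abel
    rw [h1, norm_neg, norm_smul, Real.norm_eq_abs, abs_of_pos hμ]
    field_simp
  have h1 : moreau g μ (c x + μ • y) ≤ g (c x) + ((μ / 2 * ‖y‖ ^ 2 : ℝ) : EReal) := by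
    have h := iInf_le (fun z => g z + ((‖z - (c x + μ • y)‖ ^ 2 / (2 * μ) : ℝ) : EReal)) (c x)
    simp only [hnorm] at h; exact h
  calc (f x : EReal) + moreau g μ (c x + μ • y) - ((μ / 2 * ‖y‖ ^ 2 : ℝ) : EReal)
      ≤ (f x : EReal) + (g (c x) + ((μ / 2 * ‖y‖ ^ 2 : ℝ) : EReal))
          - ((μ / 2 * ‖y‖ ^ 2 : ℝ) : EReal) :=
        EReal.sub_le_sub (add_le_add_right h1 _) (le_refl _)
    _ = ((f x : EReal) + g (c x)) + ((μ / 2 * ‖y‖ ^ 2 : ℝ) : EReal)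
          - ((μ / 2 * ‖y‖ ^ 2 : ℝ) : EReal) := by rw [add_assoc]
    _ = (f x : EReal) + g (c x) := EReal.add_sub_cancel_right

lemma moreau_lb (g : Euc m → EReal) (hbot : ∀ z, g z ≠ ⊥)
    {μ0 b : ℝ} (hμ0 : 0 < μ0) (hb : ∀ z, (b : EReal) ≤ g z + ((‖z‖ ^ 2 / (2 * μ0) : ℝ) : EReal))
    {a s μ : ℝ} {zstar : Euc m} (hs : 0 < s) (hμ : 0 < μ) (hμle : μ ≤ μ0 / 2)
    (hμsmall : a - b + (‖zstar‖ + s) ^ 2 / μ0 + (s / 2) ^ 2 / μ0 ≤ (s / 2) ^ 2 / (2 * μ))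
    (hloc : ∀ z : Euc m, dist z zstar < s → (a : EReal) < g z)
    {w : Euc m} (hw : ‖w - zstar‖ < s / 2) :
    (a : EReal) ≤ moreau g μ w := by
  have hWw : ‖w‖ ≤ ‖zstar‖ + s := by
    have := norm_sub_norm_le w zstar
    linarith
  refine le_iInf fun z => ?_
  rcases eq_top_or_lt_top (g z) with htop | hlt
  · rw [htop, EReal.top_add_coe]; exact le_top
  · have hgz : ((g z).toReal : EReal) = g z := EReal.coe_toReal hlt.ne (hbot z)
    rw [← hgz, ← EReal.coe_add, EReal.coe_le_coe_iff]
    by_cases hcase : ‖z - w‖ < s / 2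
    · have hd : dist z zstar < s := by
        calc dist z zstar ≤ dist z w + dist w zstar := dist_triangle z w zstar
          _ = ‖z - w‖ + ‖w - zstar‖ := by rw [dist_eq_norm, dist_eq_norm]
          _ < s := by linarith
      have hga := hloc z hd
      rw [← hgz, EReal.coe_lt_coe_iff] at hga
      have hq : 0 ≤ ‖z - w‖ ^ 2 / (2 * μ) := by positivity
      linarith
    · push_neg at hcase
      have hbz : b ≤ (g z).toReal + ‖z‖ ^ 2 / (2 * μ0) := by
        have h := hb z
        rw [← hgz, ← EReal.coe_add, EReal.coe_le_coe_iff] at h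
        exact h
      have hZ : ‖z‖ ≤ ‖z - w‖ + ‖w‖ := by
        simpa using norm_add_le (z - w) w
      exact real_arith a b μ0 μ s ‖zstar‖ ‖z - w‖ ‖w‖ ‖z‖ ((g z).toReal)
        hμ0 hs hμ hμle hμsmall hcase hWw hZ hbz (norm_nonneg w) (norm_nonneg z)

theorem statement15 {n m : ℕ}
    (f : Euc n → ℝ) (c : Euc n → Euc m) (g : Euc m → EReal)
    (hf : ContDiff ℝ 2 f) (hc : ContDiff ℝ 2 c)
    (hgp : ProperFn g) (hglsc : LowerSemicontinuous g) (hgpb : ProxBounded g)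
    (hphi : ∃ r : ℝ, (⨅ x : Euc n, ((f x : EReal) + g (c x))) = (r : EReal))
    (xbar : Euc n) (hmin : StrictLocalMin f c g xbar)
    (Y : Set (Euc m)) (hYbdd : IsBounded Y) :
    ∃ r : ℝ, 0 < r ∧ ∀ (yhat : ℕ → Euc m) (μ ε : ℕ → ℝ) (xs : ℕ → Euc n),
      (∀ k, yhat k ∈ Y) →
      (∀ k, BelowThreshold g (μ k)) → Antitone μ → Tendsto μ atTop (𝓝 0) →
      (∀ k, 0 ≤ ε k) → Tendsto ε atTop (𝓝 0) →
      (∀ k, ‖xs k - xbar‖ ≤ r) →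
      (∀ k, ∀ x : Euc n, ‖x - xbar‖ ≤ r →
        ALfun f c g (μ k) (xs k) (yhat k) ≤ ALfun f c g (μ k) x (yhat k) + (ε k : EReal)) →
      Tendsto xs atTop (𝓝 xbar) := by
  obtain ⟨hdom, ρ, hρ, hstrict⟩ := hmin
  have hdom' : g (c xbar) < ⊤ := hdom
  refine ⟨ρ, hρ, ?_⟩
  intro yhat μ ε xs hYmem hμthr hμanti hμ0 hεnn hε0 hxball hALmin
  obtain ⟨C, hC⟩ := hYbdd.exists_norm_le
  set MY : ℝ := max C 0 with hMYdef
  have hMY : ∀ k, ‖yhat k‖ ≤ MY := fun k => (hC _ (hYmem k)).trans (le_max_left _ _)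
  have hMY0 : 0 ≤ MY := le_max_right _ _
  have hμpos : ∀ k, 0 < μ k := fun k => (hμthr k).1
  have hGcoe : (((g (c xbar)).toReal : ℝ) : EReal) = g (c xbar) :=
    EReal.coe_toReal hdom'.ne (hgp.1 _)
  set P : ℝ := f xbar + (g (c xbar)).toReal with hPdef
  have hPP : ((P : ℝ) : EReal) = (f xbar : EReal) + g (c xbar) := by
    rw [hPdef, EReal.coe_add, hGcoe]
  have hub : ∀ k, ALfun f c g (μ k) (xs k) (yhat k) ≤ ((P + ε k : ℝ) : EReal) := by
    intro k
    calc ALfun f c g (μ k) (xs k) (yhat k)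
        ≤ ALfun f c g (μ k) xbar (yhat k) + ((ε k : ℝ) : EReal) :=
          hALmin k xbar (by simp [hρ.le])
      _ ≤ ((f xbar : EReal) + g (c xbar)) + ((ε k : ℝ) : EReal) :=
          add_le_add_left (AL_le_phi f c g (hμpos k) xbar (yhat k)) _
      _ = ((P + ε k : ℝ) : EReal) := by rw [EReal.coe_add, hPP]
  obtain ⟨μ0, hμ0pos, b, hb⟩ := hgpb
  have key : ∀ (xstar : Euc n) (σ : ℕ → ℕ), StrictMono σ →
      Tendsto (fun j => xs (σ j)) atTop (𝓝 xstar) → ‖xstar - xbar‖ ≤ ρ →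
      (f xstar : EReal) + g (c xstar) ≤ (P : EReal) := by
    intro xstar σ hσ hlim hxstar
    by_contra hnot
    push_neg at hnot
    set F : ℝ := f xstar with hFdef
    have hPF : ((P - F : ℝ) : EReal) < g (c xstar) := by
      rcases eq_top_or_lt_top (g (c xstar)) with ht | hlt
      · rw [ht]; exact EReal.coe_lt_top _
      · have hcoe : (((g (c xstar)).toReal : ℝ) : EReal) = g (c xstar) :=
          EReal.coe_toReal hlt.ne (hgp.1 _)
        rw [← hcoe] at hnot ⊢
        rw [← EReal.coe_add, EReal.coe_lt_coe_iff] at hnot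
        rw [EReal.coe_lt_coe_iff]
        linarith
    obtain ⟨a, ha1, ha2⟩ := EReal.exists_between_coe_real hPF
    rw [EReal.coe_lt_coe_iff] at ha1
    set δ : ℝ := (F + a - P) / 4 with hδdef
    have hδ : 0 < δ := by rw [hδdef]; linarith
    have hlsc := hglsc (c xstar) (a : EReal) ha2
    obtain ⟨s, hs, hloc⟩ := Metric.eventually_nhds_iff.mp hlsc
    set D : ℝ := max (a - b + (‖c xstar‖ + s) ^ 2 / μ0 + (s / 2) ^ 2 / μ0) 1 with hDdef
    have hD : 0 < D := lt_of_lt_of_le one_pos (le_max_right _ _)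
    set μstar : ℝ := min (μ0 / 2) ((s / 2) ^ 2 / (2 * D)) with hμsdef
    have hμstar : 0 < μstar := lt_min (by linarith) (by positivity)
    have hσtop : Tendsto σ atTop atTop := hσ.tendsto_atTop
    have E1 : ∀ᶠ j in atTop, ε (σ j) < δ := (hε0.comp hσtop).eventually_lt_const hδ
    have E2 : ∀ᶠ j in atTop, μ (σ j) < μstar := (hμ0.comp hσtop).eventually_lt_const hμstar
    have hfx : Tendsto (fun j => f (xs (σ j))) atTop (𝓝 F) :=
      (hf.continuous.tendsto xstar).comp hlim
    have E3 : ∀ᶠ j in atTop, F - δ < f (xs (σ j)) := hfx.eventually_const_lt (by linarith)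
    have hwj : Tendsto (fun j => c (xs (σ j)) + μ (σ j) • yhat (σ j)) atTop (𝓝 (c xstar)) := by
      have h1 : Tendsto (fun j => c (xs (σ j))) atTop (𝓝 (c xstar)) :=
        (hc.continuous.tendsto xstar).comp hlim
      have h2 : Tendsto (fun j => μ (σ j) • yhat (σ j)) atTop (𝓝 (0 : Euc m)) := by
        apply squeeze_zero_norm (a := fun j => μ (σ j) * MY)
        · intro j
          rw [norm_smul, Real.norm_eq_abs, abs_of_pos (hμpos _)]
          exact mul_le_mul_of_nonneg_left (hMY _) (hμpos _).le
        · simpa using (hμ0.comp hσtop).mul_const MY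
      simpa using h1.add h2
    have E4 : ∀ᶠ j in atTop,
        ‖(c (xs (σ j)) + μ (σ j) • yhat (σ j)) - c xstar‖ < s / 2 := by
      obtain ⟨N, hN⟩ := Metric.tendsto_atTop.mp hwj (s / 2) (by positivity)
      refine eventually_atTop.mpr ⟨N, fun j hj => ?_⟩
      have := hN j hj
      rwa [dist_eq_norm] at this
    have E5 : ∀ᶠ j in atTop, μ (σ j) * MY ^ 2 / 2 < δ := by
      have h0 : Tendsto (fun j => μ (σ j) * MY ^ 2 / 2) atTop (𝓝 (0 * MY ^ 2 / 2)) :=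
        ((hμ0.comp hσtop).mul_const _).div_const _
      have h0' : Tendsto (fun j => μ (σ j) * MY ^ 2 / 2) atTop (𝓝 0) := by simpa using h0
      exact h0'.eventually_lt_const hδ
    obtain ⟨j, h1, h2, h3, h4, h5⟩ := (E1.and (E2.and (E3.and (E4.and E5)))).exists
    set k := σ j with hkdef
    have hμk := hμpos k
    have hμkle : μ k ≤ μ0 / 2 := le_trans h2.le (min_le_left _ _)
    have hμsmall : a - b + (‖c xstar‖ + s) ^ 2 / μ0 + (s / 2) ^ 2 / μ0
        ≤ (s / 2) ^ 2 / (2 * μ k) := by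
      have hle : μ k ≤ (s / 2) ^ 2 / (2 * D) := le_trans h2.le (min_le_right _ _)
      have hD' : a - b + (‖c xstar‖ + s) ^ 2 / μ0 + (s / 2) ^ 2 / μ0 ≤ D := le_max_left _ _
      have hDle : D ≤ (s / 2) ^ 2 / (2 * μ k) := by
        rw [le_div_iff₀ (by positivity)]
        have h6 := (le_div_iff₀ (by positivity : (0:ℝ) < 2 * D)).mp hle
        nlinarith
      linarith
    have hmor : (a : EReal) ≤ moreau g (μ k) (c (xs k) + μ k • yhat k) :=
      moreau_lb g hgp.1 hμ0pos hb hs hμk hμkle hμsmall (fun z hz => hloc hz) h4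
    have hlow : ((f (xs k) + a - μ k / 2 * ‖yhat k‖ ^ 2 : ℝ) : EReal)
        ≤ ALfun f c g (μ k) (xs k) (yhat k) := by
      rw [show ((f (xs k) + a - μ k / 2 * ‖yhat k‖ ^ 2 : ℝ) : EReal)
          = ((f (xs k) + a : ℝ) : EReal) - ((μ k / 2 * ‖yhat k‖ ^ 2 : ℝ) : EReal) from
        by rw [← EReal.coe_sub]]
      refine EReal.sub_le_sub ?_ (le_refl _)
      rw [EReal.coe_add]
      exact add_le_add_right hmor _
    have hcomb := le_trans hlow (hub k)
    rw [EReal.coe_le_coe_iff] at hcomb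
    have hyb : μ k / 2 * ‖yhat k‖ ^ 2 ≤ μ k * MY ^ 2 / 2 := by
      have hsq : ‖yhat k‖ ^ 2 ≤ MY ^ 2 := pow_le_pow_left₀ (norm_nonneg _) (hMY k) 2
      nlinarith [mul_le_mul_of_nonneg_left hsq hμk.le]
    rw [hδdef] at h1 h3 h5
    linarith
  by_contra hcon
  rw [Metric.tendsto_atTop] at hcon
  push_neg at hcon
  obtain ⟨δ0, hδ0, hfr0⟩ := hcon
  have hfr : ∃ᶠ k in atTop, δ0 ≤ dist (xs k) xbar := by
    rw [frequently_atTop]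
    intro N
    obtain ⟨n0, hn0, h⟩ := hfr0 N
    exact ⟨n0, hn0, h⟩
  obtain ⟨φ₁, hφ₁, hP1⟩ := extraction_of_frequently_atTop hfr
  have hmem : ∀ j, xs (φ₁ j) ∈ Metric.closedBall xbar ρ := fun j =>
    Metric.mem_closedBall.mpr (by rw [dist_eq_norm]; exact hxball _)
  obtain ⟨xstar, hxstarK, φ₂, hφ₂, hlim⟩ := (isCompact_closedBall xbar ρ).tendsto_subseq hmem
  have hxstar : ‖xstar - xbar‖ ≤ ρ := by
    rw [← dist_eq_norm]; exact Metric.mem_closedBall.mp hxstarK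
  have hlim' : Tendsto (fun j => xs ((φ₁ ∘ φ₂) j)) atTop (𝓝 xstar) := hlim
  have hd : δ0 ≤ dist xstar xbar := by
    refine ge_of_tendsto (hlim'.dist (tendsto_const_nhds : Tendsto (fun _ => xbar) atTop (𝓝 xbar)))
      (Eventually.of_forall fun j => hP1 (φ₂ j))
  have hne : xstar ≠ xbar := by
    intro h
    rw [h, dist_self] at hd
    linarith
  have hle := key xstar (φ₁ ∘ φ₂) (hφ₁.comp hφ₂) hlim' hxstar
  have hfeas : c xstar ∈ edom g := by
    rw [edom, Set.mem_setOf_eq, lt_top_iff_ne_top]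
    intro ht
    rw [ht, EReal.coe_add_top] at hle
    exact absurd hle (by simp)
  have hc2 : (f xbar : EReal) + g (c xbar) < (P : EReal) :=
    lt_of_lt_of_le (hstrict xstar hxstar hfeas hne) hle
  rw [hPP] at hc2
  exact lt_irrefl _ hc2


end Paper
end
end

section
/- Let x̄ ∈ ℝ^n be a strict local minimizer of problem (P) and let Y ⊆ ℝ^m be nonempty and bounded. Then there exists a radius r > 0 such that for every ŷ ∈ Y and every μ ∈ (0, μ_g), the function L_μ(·, ŷ) attains its minimum over the closed ball B_r(x̄) at some point x(μ, ŷ) ∈ B_r(x̄), and these minimizers converge to x̄ uniformly on Y as μ ↓ 0: for every δ > 0 there exists μ̄ > 0 such that every minimizer of L_μ(·, ŷ) over B_r(x̄) lies within distance δ of x̄, for all μ ∈ (0, μ̄) and all ŷ ∈ Y. In particular, for μ small enough, x(μ, ŷ) is a local minimizer of L_μ(·, ŷ). -/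
open Filter Topology Bornology

noncomputable section

namespace Paper

variable {n m : ℕ}

section AuxLemmas

private lemma ereal_sub_le_of_le_add {a b : ℝ} {e : EReal} (h : (a : EReal) ≤ (b : EReal) + e) :
    ((a - b : ℝ) : EReal) ≤ e := by
  induction e using EReal.rec with
  | bot => rw [EReal.add_bot, le_bot_iff] at h; exact absurd h (EReal.coe_ne_bot a)
  | coe x =>
      rw [← EReal.coe_add, EReal.coe_le_coe_iff] at h
      exact EReal.coe_le_coe_iff.2 (by linarith)
  | top => exact le_top

private lemma ereal_exists_real_btwn {a : ℝ} {e : EReal} (h : (a : EReal) < e) :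
    ∃ γ : ℝ, a < γ ∧ (γ : EReal) < e := by
  induction e using EReal.rec with
  | bot => exact absurd h (by simp)
  | coe x =>
      have : a < x := EReal.coe_lt_coe_iff.1 h
      exact ⟨(a + x) / 2, by linarith, EReal.coe_lt_coe_iff.2 (by linarith)⟩
  | top => exact ⟨a + 1, by linarith, EReal.coe_lt_top _⟩

private lemma ereal_le_of_add_sub_le {a b p : ℝ} {e : EReal}
    (h : (a : EReal) + e - (b : EReal) ≤ (p : EReal)) : e ≤ ((p + b - a : ℝ) : EReal) := by
  induction e using EReal.rec with
  | bot => exact bot_le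
  | coe x =>
      rw [← EReal.coe_add, ← EReal.coe_sub, EReal.coe_le_coe_iff] at h
      exact EReal.coe_le_coe_iff.2 (by linarith)
  | top =>
      exfalso
      rw [EReal.coe_add_top, EReal.top_sub_coe] at h
      exact absurd (h.trans_lt (EReal.coe_lt_top p)) (lt_irrefl _)

private lemma ereal_exists_coe {e : EReal} (h1 : e ≠ ⊥) (h2 : e < ⊤) :
    ∃ x : ℝ, e = (x : EReal) := by
  induction e using EReal.rec with
  | bot => exact absurd rfl h1
  | coe x => exact ⟨x, rfl⟩
  | top => exact absurd h2 (lt_irrefl _)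

private lemma ereal_add_coe_ne_bot {e : EReal} (he : e ≠ ⊥) (b : ℝ) : e + (b : EReal) ≠ ⊥ := by
  induction e using EReal.rec with
  | bot => exact absurd rfl he
  | coe x => rw [← EReal.coe_add]; exact EReal.coe_ne_bot _
  | top => rw [EReal.top_add_coe]; simp

private lemma ereal_rearrange (a b : ℝ) (e : EReal) :
    (a : EReal) + (e + (b : EReal)) = e + ((a + b : ℝ) : EReal) := by
  rw [EReal.coe_add, ← add_assoc, add_comm (a : EReal) e, add_assoc]

private lemma lsc_exists_min {α : Type*} [TopologicalSpace α] {K : Set α} (hK : IsCompact K)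
    (hKc : IsClosed K) (hne : K.Nonempty) {F : α → EReal} (hF : LowerSemicontinuous F) :
    ∃ p ∈ K, ∀ q ∈ K, F p ≤ F q := by
  have hcl : ∀ a : EReal, IsClosed {x | F x ≤ a} := by
    intro a
    have h : {x | F x ≤ a} = (F ⁻¹' Set.Ioi a)ᶜ := by
      ext x; simp [not_lt]
    rw [h]; exact (hF.isOpen_preimage a).isClosed_compl
  haveI : Nonempty K := hne.to_subtype
  set C : K → Set α := fun q => K ∩ {x | F x ≤ F q} with hC
  have hdir : Directed (· ⊇ ·) C := by
    intro q q'
    rcases le_total (F q) (F q') with h | h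
    · exact ⟨q, subset_refl _, fun x hx => ⟨hx.1, le_trans hx.2 h⟩⟩
    · exact ⟨q', fun x hx => ⟨hx.1, le_trans hx.2 h⟩, subset_refl _⟩
  have hn : ∀ q : K, (C q).Nonempty := fun q => ⟨q, q.2, Set.mem_setOf.2 (le_refl _)⟩
  have hcc : ∀ q : K, IsCompact (C q) := fun q => hK.inter_right (hcl _)
  have hclc : ∀ q : K, IsClosed (C q) := fun q => hKc.inter (hcl _)
  obtain ⟨p, hp⟩ := IsCompact.nonempty_iInter_of_directed_nonempty_isCompact_isClosed
    C hdir hn hcc hclc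
  simp only [Set.mem_iInter] at hp
  obtain ⟨q₀⟩ := ‹Nonempty K›
  exact ⟨p, (hp q₀).1, fun q hq => (hp ⟨q, hq⟩).2⟩

private lemma quad_coercive (μ μ' W V' : ℝ) (hμ : 0 < μ) (hμμ' : μ < μ') :
    ∃ R : ℝ, 0 < R ∧ ∀ t : ℝ, R ≤ t → V' ≤ -(t ^ 2 / (2 * μ')) + (t - W) ^ 2 / (2 * μ) := by
  have hμ' : 0 < μ' := hμ.trans hμμ'
  set α := 1 / (2 * μ) with hα
  set β := 1 / (2 * μ') with hβ
  have hβpos : 0 < β := by positivity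
  have hαβ : β < α := by
    rw [hα, hβ]
    exact one_div_lt_one_div_of_lt (by linarith) (by linarith)
  have hab : 0 < α - β := by linarith
  have hαpos : 0 < α := hβpos.trans hαβ
  have hD : 0 ≤ (2 * α * |W| + |V'| + 1) / (α - β) :=
    div_nonneg (by positivity) hab.le
  refine ⟨(2 * α * |W| + |V'| + 1) / (α - β) + 1, by linarith, fun t ht => ?_⟩
  have ht1 : 1 ≤ t := by linarith
  have ht0 : 0 ≤ t := by linarith
  have h1 : 2 * α * |W| + |V'| + 1 ≤ t * (α - β) := by
    rw [← div_le_iff₀ hab]; linarith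
  have hgoal : t ^ 2 / (2 * μ') = β * t ^ 2 := by
    rw [hβ]; ring
  have hgoal2 : (t - W) ^ 2 / (2 * μ) = α * (t - W) ^ 2 := by
    rw [hα]; ring
  rw [hgoal, hgoal2]
  have h2 : (2 * α * |W| + |V'| + 1) * t ≤ (t * (α - β)) * t :=
    mul_le_mul_of_nonneg_right h1 ht0
  nlinarith [le_abs_self V', le_abs_self W, neg_abs_le W, abs_nonneg W, abs_nonneg V',
    mul_nonneg (mul_nonneg hαpos.le ht0) (by linarith [le_abs_self W] : (0:ℝ) ≤ |W| - W),
    mul_le_mul_of_nonneg_left ht1 (abs_nonneg V'), mul_nonneg hαpos.le (sq_nonneg W)]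

end AuxLemmas
private lemma part1_min {n m : ℕ} (f : Euc n → ℝ) (c : Euc n → Euc m) (g : Euc m → EReal)
    (hfc : Continuous f) (hcc : Continuous c) (hglsc : LowerSemicontinuous g)
    (hgnb : ∀ z, g z ≠ ⊥) (z₀ : Euc m) (hz₀ : g z₀ < ⊤)
    (xbar : Euc n) (r : ℝ) (hr : 0 < r) (yhat : Euc m)
    (μ : ℝ) (hμ : BelowThreshold g μ) :
    ∃ x₀ : Euc n, ‖x₀ - xbar‖ ≤ r ∧
      ∀ x : Euc n, ‖x - xbar‖ ≤ r → ALfun f c g μ x₀ yhat ≤ ALfun f c g μ x yhat := by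
  obtain ⟨hμ0, μ', hμμ', b', hb'⟩ := hμ
  obtain ⟨G₀, hG₀⟩ := ereal_exists_coe (hgnb z₀) hz₀
  set K : Set (Euc n) := Metric.closedBall xbar r with hKdef
  have hKc : IsCompact K := isCompact_closedBall xbar r
  have hKcl : IsClosed K := Metric.isClosed_closedBall
  have hxbarK : xbar ∈ K := Metric.mem_closedBall_self hr.le
  have hmemK : ∀ x : Euc n, ‖x - xbar‖ ≤ r ↔ x ∈ K := fun x => by
    rw [hKdef, Metric.mem_closedBall, dist_eq_norm]
  have hwc : Continuous fun x => c x + μ • yhat := hcc.add continuous_const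
  obtain ⟨xm, hxm, hFmin⟩ := hKc.exists_isMinOn ⟨xbar, hxbarK⟩ hfc.continuousOn
  obtain ⟨xM, hxM, hFmax⟩ := hKc.exists_isMaxOn ⟨xbar, hxbarK⟩ hfc.continuousOn
  obtain ⟨xW, hxW, hWmax⟩ := hKc.exists_isMaxOn ⟨xbar, hxbarK⟩ hwc.norm.continuousOn
  obtain ⟨xQ, hxQ, hQmax⟩ := hKc.exists_isMaxOn ⟨xbar, hxbarK⟩
    (((continuous_const.sub hwc).norm.pow 2).div_const (2 * μ)).continuousOn
  set Fmin := f xm with hFmindef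
  set Fmax := f xM with hFmaxdef
  set W := ‖c xW + μ • yhat‖ with hWdef
  set Q := ‖z₀ - (c xQ + μ • yhat)‖ ^ 2 / (2 * μ) with hQdef
  set V := Fmax + G₀ + Q with hVdef
  obtain ⟨R₀, hR₀, hquad⟩ := quad_coercive μ μ' W (V + 1 - Fmin - b') hμ0 hμμ'
  set R := max R₀ (max W ‖z₀‖) with hRdef
  set Φ : Euc n × Euc m → EReal :=
    fun p => g p.2 + ((f p.1 + ‖p.2 - (c p.1 + μ • yhat)‖ ^ 2 / (2 * μ) : ℝ) : EReal) with hΦ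
  have hΦlsc : LowerSemicontinuous Φ := by
    have h1 : Continuous fun p : Euc n × Euc m =>
        ((f p.1 + ‖p.2 - (c p.1 + μ • yhat)‖ ^ 2 / (2 * μ) : ℝ) : EReal) := by
      apply continuous_coe_real_ereal.comp
      exact (hfc.comp continuous_fst).add
        (((continuous_snd.sub (hwc.comp continuous_fst)).norm.pow 2).div_const (2 * μ))
    exact (LowerSemicontinuous.comp hglsc continuous_snd).add' h1.lowerSemicontinuous
      (fun p => EReal.continuousAt_add (Or.inr (EReal.coe_ne_bot _)) (Or.inr (EReal.coe_ne_top _)))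
  set T : Set (Euc n × Euc m) := K ×ˢ Metric.closedBall (0 : Euc m) R with hT
  have hz₀R : ‖z₀‖ ≤ R := le_max_of_le_right (le_max_right _ _)
  have hz₀T : (xbar, z₀) ∈ T := ⟨hxbarK, by rwa [Metric.mem_closedBall, dist_zero_right]⟩
  obtain ⟨p₀, hp₀T, hp₀min⟩ := lsc_exists_min (hKc.prod (isCompact_closedBall _ _))
    (hKcl.prod Metric.isClosed_closedBall) ⟨_, hz₀T⟩ hΦlsc
  have hΦz₀ : Φ (xbar, z₀) =
      ((G₀ + (f xbar + ‖z₀ - (c xbar + μ • yhat)‖ ^ 2 / (2 * μ)) : ℝ) : EReal) := by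
    rw [hΦ]; dsimp only; rw [hG₀, ← EReal.coe_add]
  have hp₀netop : Φ p₀ < ⊤ := by
    refine lt_of_le_of_lt (hp₀min _ hz₀T) ?_
    rw [hΦz₀]; exact EReal.coe_lt_top _
  have hp₀nebot : Φ p₀ ≠ ⊥ := ereal_add_coe_ne_bot (hgnb _) _
  obtain ⟨Pm, hPm⟩ := ereal_exists_coe hp₀nebot hp₀netop
  have hPmV : Pm ≤ V := by
    have h := hp₀min _ hz₀T
    rw [hPm, hΦz₀, EReal.coe_le_coe_iff] at h
    have h2 : f xbar ≤ Fmax := hFmax hxbarK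
    have h3 : ‖z₀ - (c xbar + μ • yhat)‖ ^ 2 / (2 * μ) ≤ Q := hQmax hxbarK
    rw [hVdef]; linarith
  have key : ∀ x, x ∈ K → ∀ z : Euc m,
      (Pm : EReal) ≤ (f x : EReal) +
        (g z + ((‖z - (c x + μ • yhat)‖ ^ 2 / (2 * μ) : ℝ) : EReal)) := by
    intro x hx z
    rw [ereal_rearrange]
    by_cases hzR : ‖z‖ ≤ R
    · rw [← hPm]
      exact hp₀min (x, z) ⟨hx, by rwa [Metric.mem_closedBall, dist_zero_right]⟩
    · push_neg at hzR
      have hWR : W ≤ R := le_max_of_le_right (le_max_left _ _)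
      have hR₀R : R₀ ≤ R := le_max_left _ _
      have hq := hquad ‖z‖ (le_trans hR₀R hzR.le)
      have hgz : ((b' - ‖z‖ ^ 2 / (2 * μ') : ℝ) : EReal) ≤ g z := by
        apply ereal_sub_le_of_le_add
        rw [add_comm]
        exact hb' z
      have hnrm : (‖z‖ - W) ^ 2 ≤ ‖z - (c x + μ • yhat)‖ ^ 2 := by
        have h1 : ‖c x + μ • yhat‖ ≤ W := hWmax hx
        have h2 : ‖z‖ - W ≤ ‖z - (c x + μ • yhat)‖ := by
          have := norm_sub_norm_le z (c x + μ • yhat); linarith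
        have h3 : (0:ℝ) ≤ ‖z‖ - W := by linarith
        nlinarith [norm_nonneg (z - (c x + μ • yhat))]
      have hkey1 : (‖z‖ - W) ^ 2 / (2 * μ) ≤ ‖z - (c x + μ • yhat)‖ ^ 2 / (2 * μ) :=
        div_le_div_of_nonneg_right hnrm (by positivity)
      have hreal : V + 1 ≤ (b' - ‖z‖ ^ 2 / (2 * μ')) +
          (f x + ‖z - (c x + μ • yhat)‖ ^ 2 / (2 * μ)) := by
        have hf1 : Fmin ≤ f x := hFmin hx
        linarith
      calc (Pm : EReal) ≤ ((V + 1 : ℝ) : EReal) := EReal.coe_le_coe_iff.2 (by linarith)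
        _ ≤ (((b' - ‖z‖ ^ 2 / (2 * μ')) +
              (f x + ‖z - (c x + μ • yhat)‖ ^ 2 / (2 * μ)) : ℝ) : EReal) :=
            EReal.coe_le_coe_iff.2 hreal
        _ ≤ g z + ((f x + ‖z - (c x + μ • yhat)‖ ^ 2 / (2 * μ) : ℝ) : EReal) := by
            rw [EReal.coe_add]
            exact add_le_add_left hgz _
  refine ⟨p₀.1, (hmemK _).2 hp₀T.1, fun x hxr => ?_⟩
  rw [hmemK] at hxr
  have hstep1 : (f p₀.1 : EReal) + moreau g μ (c p₀.1 + μ • yhat) ≤ (Pm : EReal) := by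
    have h1 : moreau g μ (c p₀.1 + μ • yhat) ≤
        g p₀.2 + ((‖p₀.2 - (c p₀.1 + μ • yhat)‖ ^ 2 / (2 * μ) : ℝ) : EReal) := by
      rw [moreau]
      exact iInf_le _ p₀.2
    refine le_trans (add_le_add_right h1 _) ?_
    rw [ereal_rearrange, ← hPm]
  have hstep2 : (Pm : EReal) ≤ (f x : EReal) + moreau g μ (c x + μ • yhat) := by
    have h1 : ((Pm - f x : ℝ) : EReal) ≤ moreau g μ (c x + μ • yhat) := by
      rw [moreau]
      exact le_iInf fun z => ereal_sub_le_of_le_add (key x hxr z)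
    have h2 : f x + (Pm - f x) = Pm := by ring
    calc (Pm : EReal) = (f x : EReal) + ((Pm - f x : ℝ) : EReal) := by
          rw [← EReal.coe_add, h2]
      _ ≤ _ := add_le_add_right h1 _
  simp only [ALfun]
  exact EReal.sub_le_sub (le_trans hstep1 hstep2) (le_refl _)
set_option maxHeartbeats 1000000 in
private lemma part2_conv {n m : ℕ} (f : Euc n → ℝ) (c : Euc n → Euc m) (g : Euc m → EReal)
    (hfc : Continuous f) (hcc : Continuous c) (hglsc : LowerSemicontinuous g)
    (hgnb : ∀ z, g z ≠ ⊥)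
    (xbar : Euc n) (r : ℝ) (hr : 0 < r)
    (hstrict : ∀ x : Euc n, ‖x - xbar‖ ≤ r → c x ∈ edom g → x ≠ xbar →
      (f xbar : EReal) + g (c xbar) < (f x : EReal) + g (c x))
    (hdom : c xbar ∈ edom g)
    (μ₀ b₀ : ℝ) (hμ₀ : 0 < μ₀)
    (hb₀ : ∀ z, (b₀ : EReal) ≤ g z + ((‖z‖ ^ 2 / (2 * μ₀) : ℝ) : EReal))
    (M : ℝ) (hM0 : 0 ≤ M) (Y : Set (Euc m)) (hY : ∀ y ∈ Y, ‖y‖ ≤ M)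
    (δ : ℝ) (hδ : 0 < δ) :
    ∃ μbar : ℝ, 0 < μbar ∧ ∀ μ : ℝ, BelowThreshold g μ → μ < μbar → ∀ yhat ∈ Y, ∀ x₀ : Euc n,
      (‖x₀ - xbar‖ ≤ r ∧ ∀ x : Euc n, ‖x - xbar‖ ≤ r →
        ALfun f c g μ x₀ yhat ≤ ALfun f c g μ x yhat) → ‖x₀ - xbar‖ ≤ δ := by
  obtain ⟨G, hG⟩ := ereal_exists_coe (hgnb _) hdom
  set Pb := f xbar + G with hPb
  set K : Set (Euc n) := Metric.closedBall xbar r with hKdef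
  have hKc : IsCompact K := isCompact_closedBall xbar r
  have hxbarK : xbar ∈ K := Metric.mem_closedBall_self hr.le
  have hmemK : ∀ x : Euc n, ‖x - xbar‖ ≤ r ↔ x ∈ K := fun x => by
    rw [hKdef, Metric.mem_closedBall, dist_eq_norm]
  obtain ⟨xm, hxm, hFmin⟩ := hKc.exists_isMinOn ⟨xbar, hxbarK⟩ hfc.continuousOn
  obtain ⟨xC, hxC, hCmax⟩ := hKc.exists_isMaxOn ⟨xbar, hxbarK⟩ hcc.norm.continuousOn
  set Fmin := f xm with hFmindef
  set Cmax := ‖c xC‖ with hCmaxdef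
  set W := Cmax + M with hWdef
  set A : Set (Euc n) := K ∩ {x | δ ≤ dist x xbar} with hAdef
  have hAcl : IsClosed A :=
    Metric.isClosed_closedBall.inter (isClosed_le continuous_const (continuous_id.dist continuous_const))
  have hAcomp : IsCompact A := hKc.inter_right
    (isClosed_le continuous_const (continuous_id.dist continuous_const))
  by_cases hA : A.Nonempty
  · -- main case
    set S : Set (Euc n × Euc m) := (fun x => (x, c x)) '' A with hSdef
    have hScomp : IsCompact S := hAcomp.image (continuous_id.prodMk hcc)
    set Φ : Euc n × Euc m → EReal := fun p => g p.2 + ((f p.1 : ℝ) : EReal) with hΦ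
    have hΦlsc : LowerSemicontinuous Φ := by
      have h1 : Continuous fun p : Euc n × Euc m => ((f p.1 : ℝ) : EReal) :=
        continuous_coe_real_ereal.comp (hfc.comp continuous_fst)
      exact (LowerSemicontinuous.comp hglsc continuous_snd).add' h1.lowerSemicontinuous
        (fun p => EReal.continuousAt_add (Or.inr (EReal.coe_ne_bot _))
          (Or.inr (EReal.coe_ne_top _)))
    obtain ⟨p₂, hp₂S, hmin2⟩ := lsc_exists_min hScomp hScomp.isClosed
      (hA.image _) hΦlsc
    have hPbmv : (Pb : EReal) < Φ p₂ := by
      obtain ⟨xs, hxsA, hxseq⟩ := hp₂S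
      have hxsr : ‖xs - xbar‖ ≤ r := by
        rw [hmemK]; exact hxsA.1
      have hxsne : xs ≠ xbar := by
        intro h
        have h2 : δ ≤ dist xs xbar := hxsA.2
        rw [h, dist_self] at h2; linarith
      by_cases hfeas : g (c xs) < ⊤
      · have h3 := hstrict xs hxsr hfeas hxsne
        rw [hG, ← EReal.coe_add] at h3
        rw [← hxseq, hΦ]
        dsimp only
        rw [add_comm]
        exact h3
      · rw [← hxseq, hΦ]
        dsimp only
        rw [eq_top_iff.2 (not_lt.1 hfeas), EReal.top_add_coe]
        exact EReal.coe_lt_top _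
    obtain ⟨γ, hγPb, hγmv⟩ := ereal_exists_real_btwn hPbmv
    set U : Set (Euc n × Euc m) := Φ ⁻¹' Set.Ioi (γ : EReal) with hU
    have hUopen : IsOpen U := hΦlsc.isOpen_preimage _
    have hSU : S ⊆ U := fun q hq => lt_of_lt_of_le hγmv (hmin2 q hq)
    obtain ⟨η, hη, hthick⟩ := hScomp.exists_cthickening_subset_open hUopen hSU
    set ε := (γ - Pb) / 4 with hε
    have hεpos : 0 < ε := by rw [hε]; linarith
    have hW0 : 0 ≤ W := by
      rw [hWdef, hCmaxdef]; positivity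
    set C₄ := |Pb| + M ^ 2 / 2 + ε + |Fmin| + |b₀| + W ^ 2 / μ₀ + 1 with hC₄
    have hC₄pos : 0 < C₄ := by
      rw [hC₄]
      have h1 := abs_nonneg Pb
      have h2 := abs_nonneg Fmin
      have h3 := abs_nonneg b₀
      have h4 : (0:ℝ) ≤ W ^ 2 / μ₀ := by positivity
      have h5 : (0:ℝ) ≤ M ^ 2 / 2 := by positivity
      linarith
    refine ⟨min (min (μ₀ / 4) 1) (min (η ^ 2 / (16 * (C₄ + 1)))
      (min (η / (2 * (M + 1))) ((γ - Pb) / (2 * (M ^ 2 + 1))))), ?_, ?_⟩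
    · refine lt_min (lt_min (by linarith) one_pos) (lt_min (by positivity)
        (lt_min (by positivity) (div_pos (by linarith) (by positivity))))
    intro μ hBT hμμbar yhat hyY x₀ ⟨hx₀r, hx₀min⟩
    by_contra hcon
    push_neg at hcon
    have hμ0 : 0 < μ := hBT.1
    have hμA : μ < μ₀ / 4 :=
      lt_of_lt_of_le hμμbar (le_trans (min_le_left _ _) (min_le_left _ _))
    have hμ1 : μ ≤ 1 :=
      le_of_lt (lt_of_lt_of_le hμμbar (le_trans (min_le_left _ _) (min_le_right _ _)))
    have hμB : μ < η ^ 2 / (16 * (C₄ + 1)) :=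
      lt_of_lt_of_le hμμbar (le_trans (min_le_right _ _) (min_le_left _ _))
    have hμC : μ < η / (2 * (M + 1)) :=
      lt_of_lt_of_le hμμbar (le_trans (min_le_right _ _)
        (le_trans (min_le_right _ _) (min_le_left _ _)))
    have hμD : μ < (γ - Pb) / (2 * (M ^ 2 + 1)) :=
      lt_of_lt_of_le hμμbar (le_trans (min_le_right _ _)
        (le_trans (min_le_right _ _) (min_le_right _ _)))
    have hx₀K : x₀ ∈ K := (hmemK _).1 hx₀r
    have hx₀A : x₀ ∈ A := ⟨hx₀K, by rw [Set.mem_setOf, dist_eq_norm]; exact hcon.le⟩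
    have hyM : ‖yhat‖ ≤ M := hY yhat hyY
    have hy2 : ‖yhat‖ ^ 2 ≤ M ^ 2 := by nlinarith [norm_nonneg yhat]
    -- value at xbar
    have hvalbar : ALfun f c g μ xbar yhat ≤ (Pb : EReal) := by
      simp only [ALfun]
      have h1 : moreau g μ (c xbar + μ • yhat) ≤
          ((G + μ / 2 * ‖yhat‖ ^ 2 : ℝ) : EReal) := by
        rw [moreau]
        refine le_trans (iInf_le _ (c xbar)) ?_
        rw [hG, ← EReal.coe_add, EReal.coe_le_coe_iff]
        have h2 : c xbar - (c xbar + μ • yhat) = -(μ • yhat) := by abel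
        rw [h2, norm_neg, norm_smul, Real.norm_eq_abs, abs_of_pos hμ0]
        have h3 : (μ * ‖yhat‖) ^ 2 / (2 * μ) = μ / 2 * ‖yhat‖ ^ 2 := by
          field_simp
        rw [h3]
      refine le_trans (EReal.sub_le_sub (add_le_add_right h1 _) (le_refl _)) ?_
      rw [← EReal.coe_add, ← EReal.coe_sub, EReal.coe_le_coe_iff, hPb]
      ring_nf
      linarith
    have hval : ALfun f c g μ x₀ yhat ≤ (Pb : EReal) :=
      le_trans (hx₀min xbar (by rw [sub_self, norm_zero]; exact hr.le)) hvalbar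
    simp only [ALfun] at hval
    have h3 := ereal_le_of_add_sub_le hval
    -- h3 : moreau ≤ coe (Pb + μ/2*‖yhat‖^2 - f x₀)
    have h4 : moreau g μ (c x₀ + μ • yhat) <
        ((Pb + μ / 2 * ‖yhat‖ ^ 2 - f x₀ + ε : ℝ) : EReal) :=
      lt_of_le_of_lt h3 (EReal.coe_lt_coe_iff.2 (by linarith))
    rw [moreau] at h4
    obtain ⟨z, hz⟩ := iInf_lt_iff.1 h4
    have hgzt : g z ≠ ⊤ := by
      intro h
      rw [h, EReal.top_add_coe] at hz
      exact absurd hz (by simp)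
    obtain ⟨gz, hgz⟩ := ereal_exists_coe (hgnb z) (lt_top_iff_ne_top.2 hgzt)
    rw [hgz, ← EReal.coe_add, EReal.coe_lt_coe_iff] at hz
    have hprox := hb₀ z
    rw [hgz, ← EReal.coe_add, EReal.coe_le_coe_iff] at hprox
    -- real arithmetic
    set s := ‖z - (c x₀ + μ • yhat)‖ with hs
    have hs0 : 0 ≤ s := norm_nonneg _
    have hFx₀ : Fmin ≤ f x₀ := hFmin hx₀K
    have hw₀ : ‖c x₀ + μ • yhat‖ ≤ W := by
      refine le_trans (norm_add_le _ _) ?_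
      rw [norm_smul, Real.norm_eq_abs, abs_of_pos hμ0, hWdef]
      have h5 : ‖c x₀‖ ≤ Cmax := hCmax hx₀K
      have h6 : μ * ‖yhat‖ ≤ 1 * M :=
        mul_le_mul hμ1 hyM (norm_nonneg _) zero_le_one
      linarith
    clear_value s Pb Fmin Cmax W ε C₄
    have hzn : ‖z‖ ≤ s + W := by
      have h7 := norm_add_le (z - (c x₀ + μ • yhat)) (c x₀ + μ • yhat)
      rw [sub_add_cancel] at h7
      exact le_trans h7 (by linarith)
    have hz2 : ‖z‖ ^ 2 ≤ 2 * s ^ 2 + 2 * W ^ 2 := by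
      nlinarith [norm_nonneg z, sq_nonneg (s - W), sq_nonneg (s + W)]
    have hzdiv : ‖z‖ ^ 2 / (2 * μ₀) ≤ s ^ 2 / μ₀ + W ^ 2 / μ₀ := by
      have h8 : (2 * s ^ 2 + 2 * W ^ 2) / (2 * μ₀) = s ^ 2 / μ₀ + W ^ 2 / μ₀ := by
        field_simp
      rw [← h8]
      exact div_le_div_of_nonneg_right hz2 (by positivity)
    have ht : μ / 2 * ‖yhat‖ ^ 2 ≤ M ^ 2 / 2 := by nlinarith
    have hC₁ : Pb + μ / 2 * ‖yhat‖ ^ 2 - f x₀ ≤ |Pb| + M ^ 2 / 2 + |Fmin| := by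
      have := le_abs_self Pb
      have := neg_abs_le Fmin
      linarith
    clear hvalbar hval h3 h4 hmin2 hγmv hPbmv hSU hx₀min hstrict hb₀ hY hglsc hΦlsc hfc hcc hdom
    -- s^2/(2μ) bound
    have e1 : s ^ 2 / (2 * μ) < C₄ - 1 + s ^ 2 / μ₀ := by
      have h9 := le_abs_self b₀
      have h10 := neg_abs_le b₀
      rw [hC₄]
      linarith
    have e2 : s ^ 2 / (4 * μ) ≤ s ^ 2 / (2 * μ) - s ^ 2 / μ₀ := by
      have h11 : 1 / μ₀ ≤ 1 / (4 * μ) :=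
        one_div_le_one_div_of_le (by positivity) (by linarith)
      have h12 : s ^ 2 / (2 * μ) - s ^ 2 / μ₀ - s ^ 2 / (4 * μ) =
          s ^ 2 * (1 / (4 * μ) - 1 / μ₀) := by
        field_simp; ring
      nlinarith [mul_nonneg (sq_nonneg s) (by linarith : (0:ℝ) ≤ 1 / (4 * μ) - 1 / μ₀)]
    have e3 : s ^ 2 < 4 * μ * C₄ := by
      have h13 : s ^ 2 / (4 * μ) < C₄ := by linarith
      have h14 := (div_lt_iff₀ (by positivity : (0:ℝ) < 4 * μ)).1 h13
      linarith
    have e4 : s ^ 2 < η ^ 2 / 4 := by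
      have h15 : μ * (C₄ + 1) < (η ^ 2 / (16 * (C₄ + 1))) * (C₄ + 1) :=
        mul_lt_mul_of_pos_right hμB (by linarith)
      have h16 : (η ^ 2 / (16 * (C₄ + 1))) * (C₄ + 1) = η ^ 2 / 16 := by
        field_simp; try ring
      have h17 : μ * C₄ ≤ μ * (C₄ + 1) := by linarith [hμ0.le]
      rw [h16] at h15
      linarith
    have e5 : s < η / 2 := by
      by_contra hcs
      push_neg at hcs
      have h23 : (η / 2) ^ 2 ≤ s ^ 2 := pow_le_pow_left₀ (by positivity) hcs 2
      have h24 : (η / 2) ^ 2 = η ^ 2 / 4 := by ring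
      linarith [e4]
    have e6 : ‖z - c x₀‖ < η := by
      have h18 : z - c x₀ = (z - (c x₀ + μ • yhat)) + μ • yhat := by abel
      have h19 : ‖z - c x₀‖ ≤ s + μ * ‖yhat‖ := by
        rw [h18]
        refine le_trans (norm_add_le _ _) ?_
        rw [norm_smul, Real.norm_eq_abs, abs_of_pos hμ0, ← hs]
      have h20 : μ * ‖yhat‖ < η / 2 := by
        have h21 : μ * (M + 1) < (η / (2 * (M + 1))) * (M + 1) :=
          mul_lt_mul_of_pos_right hμC (by linarith)
        have h22 : (η / (2 * (M + 1))) * (M + 1) = η / 2 := by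
          field_simp; try ring
        linarith [mul_le_mul_of_nonneg_left hyM hμ0.le, hμ0.le]
      linarith
    have e7 : (x₀, z) ∈ Metric.cthickening η S := by
      refine Metric.mem_cthickening_of_dist_le (x₀, z) (x₀, c x₀) η S
        ⟨x₀, hx₀A, rfl⟩ ?_
      rw [Prod.dist_eq, dist_self, dist_eq_norm]
      exact max_le hη.le e6.le
    have e8 : (γ : EReal) < Φ (x₀, z) := hthick e7
    rw [hΦ] at e8
    dsimp only at e8
    rw [hgz, ← EReal.coe_add, EReal.coe_lt_coe_iff] at e8
    -- final contradiction
    have e9 : 0 ≤ s ^ 2 / (2 * μ) := by positivity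
    have e10 : μ * (M ^ 2 + 1) < ((γ - Pb) / (2 * (M ^ 2 + 1))) * (M ^ 2 + 1) :=
      mul_lt_mul_of_pos_right hμD (by positivity)
    have e11 : ((γ - Pb) / (2 * (M ^ 2 + 1))) * (M ^ 2 + 1) = (γ - Pb) / 2 := by
      field_simp; try ring
    have e12 : μ / 2 * ‖yhat‖ ^ 2 ≤ μ * (M ^ 2 + 1) := by
      linarith [mul_nonneg hμ0.le (sub_nonneg.2 hy2), mul_nonneg hμ0.le (sq_nonneg M), hμ0.le]
    rw [hε] at hz
    linarith
  · -- A empty: any μbar works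
    refine ⟨1, one_pos, ?_⟩
    intro μ _ _ yhat _ x₀ ⟨hx₀r, _⟩
    by_contra hcon
    push_neg at hcon
    exact hA ⟨x₀, (hmemK _).1 hx₀r, by rw [Set.mem_setOf, dist_eq_norm]; exact hcon.le⟩
theorem statement16 {n m : ℕ}
    (f : Euc n → ℝ) (c : Euc n → Euc m) (g : Euc m → EReal)
    (hf : ContDiff ℝ 2 f) (hc : ContDiff ℝ 2 c)
    (hgp : ProperFn g) (hglsc : LowerSemicontinuous g) (hgpb : ProxBounded g)
    (hphi : ∃ r : ℝ, (⨅ x : Euc n, ((f x : EReal) + g (c x))) = (r : EReal))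
    (xbar : Euc n) (hmin : StrictLocalMin f c g xbar)
    (Y : Set (Euc m)) (hYne : Y.Nonempty) (hYbdd : IsBounded Y) :
    ∃ r : ℝ, 0 < r ∧
      (∀ yhat ∈ Y, ∀ μ : ℝ, BelowThreshold g μ →
        ∃ x₀ : Euc n, ‖x₀ - xbar‖ ≤ r ∧
          ∀ x : Euc n, ‖x - xbar‖ ≤ r → ALfun f c g μ x₀ yhat ≤ ALfun f c g μ x yhat) ∧
      (∀ δ : ℝ, 0 < δ → ∃ μbar : ℝ, 0 < μbar ∧
        ∀ μ : ℝ, BelowThreshold g μ → μ < μbar → ∀ yhat ∈ Y, ∀ x₀ : Euc n,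
          (‖x₀ - xbar‖ ≤ r ∧
            ∀ x : Euc n, ‖x - xbar‖ ≤ r → ALfun f c g μ x₀ yhat ≤ ALfun f c g μ x yhat) →
          ‖x₀ - xbar‖ ≤ δ) ∧
      (∃ μbar : ℝ, 0 < μbar ∧
        ∀ μ : ℝ, BelowThreshold g μ → μ < μbar → ∀ yhat ∈ Y, ∀ x₀ : Euc n,
          (‖x₀ - xbar‖ ≤ r ∧
            ∀ x : Euc n, ‖x - xbar‖ ≤ r → ALfun f c g μ x₀ yhat ≤ ALfun f c g μ x yhat) →
          ∃ ρ : ℝ, 0 < ρ ∧ ∀ x : Euc n, ‖x - x₀‖ ≤ ρ →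
            ALfun f c g μ x₀ yhat ≤ ALfun f c g μ x yhat) := by
  obtain ⟨hdom, ρ, hρ, hstrict⟩ := hmin
  obtain ⟨hgnb, z₀, hz₀⟩ := hgp
  obtain ⟨μ₀, hμ₀pos, b₀, hb₀⟩ := hgpb
  obtain ⟨C, hC⟩ := isBounded_iff_forall_norm_le.1 hYbdd
  set M := max C 0 with hM
  have hM0 : 0 ≤ M := le_max_right _ _
  have hMY : ∀ y ∈ Y, ‖y‖ ≤ M := fun y hy => le_trans (hC y hy) (le_max_left _ _)
  have hfc : Continuous f := hf.continuous
  have hcc : Continuous c := hc.continuous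
  refine ⟨ρ, hρ, ?_, ?_, ?_⟩
  · intro yhat _ μ hμ
    exact part1_min f c g hfc hcc hglsc hgnb z₀ hz₀ xbar ρ hρ yhat μ hμ
  · intro δ hδ
    exact part2_conv f c g hfc hcc hglsc hgnb xbar ρ hρ hstrict hdom μ₀ b₀ hμ₀pos hb₀
      M hM0 Y hMY δ hδ
  · obtain ⟨μbar, hμbar, H⟩ := part2_conv f c g hfc hcc hglsc hgnb xbar ρ hρ hstrict hdom
      μ₀ b₀ hμ₀pos hb₀ M hM0 Y hMY (ρ / 2) (by linarith)
    refine ⟨μbar, hμbar, ?_⟩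
    intro μ hBT hμμbar yhat hyY x₀ hx₀
    have hhalf : ‖x₀ - xbar‖ ≤ ρ / 2 := H μ hBT hμμbar yhat hyY x₀ hx₀
    refine ⟨ρ / 2, by linarith, fun x hx => ?_⟩
    refine hx₀.2 x ?_
    have h1 : x - xbar = (x - x₀) + (x₀ - xbar) := by abel
    calc ‖x - xbar‖ ≤ ‖x - x₀‖ + ‖x₀ - xbar‖ := by rw [h1]; exact norm_add_le _ _
      _ ≤ ρ := by linarith

end Paper
end
end
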